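/- Let w_{P/Q} ∈ W_P be the longest element that is a minimal-length representative in its coset w_{P/Q}W_Q. Then: (1) Inv(w_{P/Q}) = R_P^+ \ R_Q^+; (2) ℓ(w_{P/Q}) = ⟨−2ρ_P, γ^∨⟩; (3) ℓ(w_{P/Q} s_γ) = ℓ(w_{P/Q}) + ℓ(s_γ) = ⟨2(ρ − ρ_P), γ^∨⟩ − 1. -/

import Mathlib

/- A combinatorial framework for reduced crystallographic root systems with a
chosen system of simple roots, realized inside a real inner product space.
Weyl group elements are represented as plain functions `V → V` that are
compositions of simple reflections; `len` is the Coxeter length. -/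

noncomputable section
open Classical
open scoped RealInnerProductSpace

namespace Pp

variable {V : Type*} [NormedAddCommGroup V] [InnerProductSpace ℝ V]

/-- The coroot pairing `⟨x, α^∨⟩ = 2⟨x,α⟩/⟨α,α⟩`. -/
def cpr (x α : V) : ℝ := 2 * ⟪x, α⟫ / ⟪α, α⟫

/-- The reflection `s_α`, as a plain function. -/
def sref (α : V) : V → V := fun x => x - cpr x α • α

/-- `w` is a product of `n` reflections in simple roots taken from `Δ`. -/
def IsWord (Δ : Finset V) (w : V → V) (n : ℕ) : Prop :=
  ∃ l : List V, l.length = n ∧ (∀ α ∈ l, α ∈ Δ) ∧ w = (l.map sref).foldr (· ∘ ·) id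

/-- The Weyl group generated by the simple reflections, as a set of functions. -/
def Weyl (Δ : Finset V) : Set (V → V) := { w | ∃ n, IsWord Δ w n }

/-- Coxeter length with respect to the simple system `Δ`. -/
def len (Δ : Finset V) (w : V → V) : ℕ := sInf { n | IsWord Δ w n }

/-- The positive roots: roots which are nonnegative combinations of the
simple roots in `Δ`.  For a sub-system `Δ' ⊆ Δ`, `Pos Φ Δ'` is the set of
positive roots supported on `Δ'`. -/
def Pos (Φ Δ : Finset V) : Finset V :=
  Φ.filter fun β => ∃ c : V → ℝ, (∀ α ∈ Δ, 0 ≤ c α) ∧ β = ∑ α ∈ Δ, c α • α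

/-- Half sum of positive roots. -/
def rho (Φ Δ : Finset V) : V := (2:ℝ)⁻¹ • ∑ β ∈ Pos Φ Δ, β

/-- The axioms of a reduced crystallographic root system `Φ` with simple
system `Δ`. -/
structure IsRS (Φ Δ : Finset V) : Prop where
  zero_not_mem : (0:V) ∉ Φ
  neg_mem : ∀ α ∈ Φ, -α ∈ Φ
  reduced : ∀ α ∈ Φ, ∀ t : ℝ, t • α ∈ (Φ : Set V) → t = 1 ∨ t = -1
  cryst : ∀ α ∈ Φ, ∀ β ∈ Φ, ∃ k : ℤ, (k : ℝ) = cpr α β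
  refl_mem : ∀ α ∈ Φ, ∀ β ∈ Φ, sref α β ∈ Φ
  simple_mem : ∀ α ∈ Δ, α ∈ Φ
  simple_indep : LinearIndependent ℝ (fun α : Δ => (α : V))
  pos_or_neg : ∀ β ∈ Φ, β ∈ Pos Φ Δ ∨ -β ∈ Pos Φ Δ

/-- `β` is a quantum root: `ℓ(s_β) = ⟨2ρ, β^∨⟩ - 1`. -/
def IsQuantum (Φ Δ : Finset V) (β : V) : Prop :=
  (len Δ (sref β) : ℝ) = cpr ((2:ℝ) • rho Φ Δ) β - 1

/-- Minimal length coset representatives `W^P`: elements of `W` mapping the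
positive roots of the parabolic (`Pos Φ ΔP`) to positive roots. -/
def MinRep (Φ Δ ΔP : Finset V) (w : V → V) : Prop :=
  w ∈ Weyl Δ ∧ ∀ β ∈ Pos Φ ΔP, w β ∈ Pos Φ Δ

/-- `θ` is the highest root. -/
def IsHighest (Φ Δ : Finset V) (θ : V) : Prop :=
  θ ∈ Pos Φ Δ ∧ ∀ β ∈ Φ, ∃ c : V → ℝ, (∀ α ∈ Δ, 0 ≤ c α) ∧ θ - β = ∑ α ∈ Δ, c α • α

/-- All roots have the same length. -/
def SimplyLaced (Φ : Finset V) : Prop := ∀ α ∈ Φ, ∀ β ∈ Φ, ⟪α, α⟫ = ⟪β, β⟫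

/-- The node `ι ∈ Δ` is minuscule: the coefficient of `α_ι^∨` in every coroot
is at most `1`. -/
def Minuscule (Φ Δ : Finset V) (ι : V) : Prop :=
  ∀ β ∈ Φ, ∀ c : V → ℝ,
    (2 / ⟪β, β⟫) • β = ∑ α ∈ Δ, c α • ((2 / ⟪α, α⟫) • α) → c ι ≤ 1

/-- The node `ι ∈ Δ` is cominuscule: the coefficient of `α_ι` in every
positive root is at most `1`. -/
def Cominuscule (Φ Δ : Finset V) (ι : V) : Prop :=
  ∀ β ∈ Pos Φ Δ, ∀ c : V → ℝ,
    ((∀ α ∈ Δ, 0 ≤ c α) ∧ β = ∑ α ∈ Δ, c α • α) → c ι ≤ 1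

/-- `(Φ, Δ)` is the root system of type `B_n` in the standard coordinates
given by the orthonormal family `e`. -/
def TypeBData (Φ Δ : Finset V) (n : ℕ) (e : Fin n → V) : Prop :=
  Orthonormal ℝ e ∧
  (Φ : Set V) =
    ({v | ∃ i j : Fin n, i ≠ j ∧ (v = e i - e j ∨ v = e i + e j ∨ v = -(e i + e j))} ∪
     {v | ∃ i : Fin n, v = e i ∨ v = -(e i)}) ∧
  (Δ : Set V) =
    ({v | ∃ i : Fin n, ∃ h : (i : ℕ) + 1 < n, v = e i - e ⟨(i : ℕ) + 1, h⟩} ∪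
     {v | ∃ h : 0 < n, v = e ⟨n - 1, by omega⟩})

/-- `(Φ, Δ)` is the root system of type `C_n` in the standard coordinates
given by the orthonormal family `e`. -/
def TypeCData (Φ Δ : Finset V) (n : ℕ) (e : Fin n → V) : Prop :=
  Orthonormal ℝ e ∧
  (Φ : Set V) =
    ({v | ∃ i j : Fin n, i ≠ j ∧ (v = e i - e j ∨ v = e i + e j ∨ v = -(e i + e j))} ∪
     {v | ∃ i : Fin n, v = (2:ℝ) • e i ∨ v = -((2:ℝ) • e i)}) ∧
  (Δ : Set V) =
    ({v | ∃ i : Fin n, ∃ h : (i : ℕ) + 1 < n, v = e i - e ⟨(i : ℕ) + 1, h⟩} ∪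
     {v | ∃ h : 0 < n, v = (2:ℝ) • e ⟨n - 1, by omega⟩})

/-- `γ` is the distinguished (quantum) root attached to the minuscule node
`ι`: `γ = α_ι` in the simply-laced case, `γ = α_{n-1} + 2α_n = e_{n-1} + e_n`
in type `B_n` (with `ι = n`), and `γ = θ = 2e_1` in type `C_n` (with `ι = 1`). -/
def DistinguishedGamma (Φ Δ : Finset V) (ι γ : V) : Prop :=
  (SimplyLaced Φ ∧ γ = ι) ∨
  (∃ n : ℕ, ∃ _h : 2 ≤ n, ∃ e : Fin n → V, TypeBData Φ Δ n e ∧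
    ι = e ⟨n - 1, by omega⟩ ∧ γ = e ⟨n - 2, by omega⟩ + e ⟨n - 1, by omega⟩) ∨
  (∃ n : ℕ, ∃ _h : 2 ≤ n, ∃ e : Fin n → V, TypeCData Φ Δ n e ∧
    ι = e ⟨0, by omega⟩ - e ⟨1, by omega⟩ ∧ γ = (2:ℝ) • e ⟨0, by omega⟩)

end Pp

section Aux
open Pp
variable {V : Type*} [NormedAddCommGroup V] [InnerProductSpace ℝ V]

open scoped RealInnerProductSpace

namespace Pq

/-- product of reflections along a list -/
def WP (l : List V) : V → V := (l.map Pp.sref).foldr (· ∘ ·) id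

lemma cpr_zero_right (x : V) : cpr x (0:V) = 0 := by
  simp [cpr]

lemma cpr_add (x y α : V) : cpr (x + y) α = cpr x α + cpr y α := by
  simp [cpr, inner_add_left]; ring

lemma cpr_smul (r : ℝ) (x α : V) : cpr (r • x) α = r * cpr x α := by
  simp [cpr, inner_smul_left]; ring

lemma cpr_neg (x α : V) : cpr (-x) α = - cpr x α := by
  simp [cpr, inner_neg_left]; ring

lemma cpr_sub (x y α : V) : cpr (x - y) α = cpr x α - cpr y α := by
  simp [cpr, inner_sub_left]; ring

lemma cpr_zero (α : V) : cpr (0:V) α = 0 := by simp [cpr]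

lemma ips {α : V} (h : α ≠ 0) : (0:ℝ) < ⟪α, α⟫ := by
  rw [real_inner_self_eq_norm_mul_norm]
  exact mul_pos (norm_pos_iff.mpr h) (norm_pos_iff.mpr h)

lemma cpr_self {α : V} (h : α ≠ 0) : cpr α α = 2 := by
  have h2 : ⟪α, α⟫ ≠ 0 := ne_of_gt (ips h)
  rw [cpr, mul_div_assoc, div_self h2, mul_one]

lemma sref_apply (α x : V) : sref α x = x - cpr x α • α := rfl

lemma sref_zero_left (x : V) : sref (0:V) x = x := by
  simp [sref, cpr]

lemma sref_add (α x y : V) : sref α (x + y) = sref α x + sref α y := by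
  simp [sref, cpr_add, add_smul]; abel

lemma sref_smul (α : V) (r : ℝ) (x : V) : sref α (r • x) = r • sref α x := by
  simp [sref, cpr_smul, smul_sub, mul_smul]

lemma sref_neg (α x : V) : sref α (-x) = - sref α x := by
  have := sref_smul α (-1) x; simpa using this

lemma sref_sub (α x y : V) : sref α (x - y) = sref α x - sref α y := by
  rw [sub_eq_add_neg, sref_add, sref_neg, sub_eq_add_neg]

lemma sref_zero (α : V) : sref α (0:V) = 0 := by simp [sref, cpr]

lemma sref_self (α : V) : sref α α = -α := by
  by_cases h : α = 0
  · simp [h, sref_zero]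
  · rw [sref_apply, cpr_self h]; module

lemma sref_inner (α x y : V) : ⟪sref α x, sref α y⟫ = ⟪x, y⟫ := by
  by_cases h : α = 0
  · simp [h, sref_zero_left]
  · have h2 : ⟪α, α⟫ ≠ 0 := ne_of_gt (ips h)
    simp only [sref, cpr, inner_sub_left, inner_sub_right, inner_smul_left,
      inner_smul_right, conj_trivial, RCLike.ofReal_real_eq_id, id_eq, map_div₀, map_mul,
      map_ofNat]
    have hsymm : ⟪y, α⟫ = ⟪α, y⟫ := real_inner_comm α y
    have hsymm2 : ⟪x, α⟫ = ⟪α, x⟫ := real_inner_comm α x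
    field_simp
    ring_nf
    rw [real_inner_comm α x, real_inner_comm α y]
    ring

lemma sref_sref (α x : V) : sref α (sref α x) = x := by
  by_cases h : α = 0
  · simp [h, sref_zero_left]
  · rw [sref_apply, sref_apply, cpr_sub, cpr_smul, cpr_self h]
    module

lemma sref_cpr (α x y : V) : cpr (sref α x) (sref α y) = cpr x y := by
  unfold cpr; rw [sref_inner, sref_inner]


lemma WP_nil : WP ([] : List V) = id := rfl

lemma WP_cons (a : V) (l : List V) : WP (a :: l) = sref a ∘ WP l := rfl

lemma WP_append (l₁ l₂ : List V) : WP (l₁ ++ l₂) = WP l₁ ∘ WP l₂ := by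
  induction l₁ with
  | nil => rfl
  | cons a t ih => simp [WP_cons, ih, Function.comp_assoc]

lemma WP_concat (l : List V) (a : V) : WP (l ++ [a]) = WP l ∘ sref a := by
  rw [WP_append]; rfl

lemma WP_add (l : List V) (x y : V) : WP l (x + y) = WP l x + WP l y := by
  induction l with
  | nil => rfl
  | cons a t ih => simp [WP_cons, ih, sref_add]

lemma WP_smul (l : List V) (r : ℝ) (x : V) : WP l (r • x) = r • WP l x := by
  induction l with
  | nil => rfl
  | cons a t ih => simp [WP_cons, ih, sref_smul]

lemma WP_neg (l : List V) (x : V) : WP l (-x) = - WP l x := by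
  have := WP_smul l (-1) x; simpa using this

lemma WP_sub (l : List V) (x y : V) : WP l (x - y) = WP l x - WP l y := by
  rw [sub_eq_add_neg, WP_add, WP_neg, sub_eq_add_neg]

lemma WP_inner (l : List V) (x y : V) : ⟪WP l x, WP l y⟫ = ⟪x, y⟫ := by
  induction l with
  | nil => rfl
  | cons a t ih => simp only [WP_cons, Function.comp_apply, sref_inner]; exact ih

lemma WP_cpr (l : List V) (x y : V) : cpr (WP l x) (WP l y) = cpr x y := by
  unfold cpr; rw [WP_inner, WP_inner]

lemma WP_reverse (l : List V) (x : V) : WP l (WP l.reverse x) = x := by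
  induction l generalizing x with
  | nil => rfl
  | cons a t ih =>
      simp only [WP_cons, List.reverse_cons, WP_concat, Function.comp_apply]
      rw [ih, sref_sref]

lemma WP_reverse' (l : List V) (x : V) : WP l.reverse (WP l x) = x := by
  have := WP_reverse l.reverse x
  rwa [List.reverse_reverse] at this

lemma WP_zero (l : List V) : WP l (0:V) = 0 := by
  have := WP_smul l 0 0; simpa using this

lemma WP_sum (l : List V) (s : Finset V) (g : V → ℝ) :
    WP l (∑ α ∈ s, g α • α) = ∑ α ∈ s, g α • WP l α := by
  classical
  induction s using Finset.induction_on with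
  | empty => simp [WP_zero]
  | @insert a s' h ih => rw [Finset.sum_insert h, Finset.sum_insert h, WP_add, WP_smul, ih]

/-- conjugation: `u ∘ s_α = s_{uα} ∘ u` for u a word. -/
lemma WP_conj (l : List V) (α : V) : WP l ∘ sref α = sref (WP l α) ∘ WP l := by
  funext x
  simp only [Function.comp_apply, sref_apply, WP_sub, WP_smul, WP_cpr]

lemma sref_conj (a α : V) : sref a ∘ sref α = sref (sref a α) ∘ sref a := by
  have := WP_conj [a] α
  simpa [WP_cons, WP_nil] using this

/-- membership in span of a finite set, elementary version -/
def Spn (Δ : Finset V) (x : V) : Prop := ∃ c : V → ℝ, x = ∑ α ∈ Δ, c α • α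

/-- nonnegative combination -/
def NN (Δ : Finset V) (x : V) : Prop :=
  ∃ c : V → ℝ, (∀ α ∈ Δ, 0 ≤ c α) ∧ x = ∑ α ∈ Δ, c α • α

lemma Spn_zero (Δ : Finset V) : Spn Δ (0:V) := ⟨0, by simp⟩

lemma Spn_add {Δ : Finset V} {x y : V} (hx : Spn Δ x) (hy : Spn Δ y) :
    Spn Δ (x + y) := by
  obtain ⟨c, hc⟩ := hx; obtain ⟨d, hd⟩ := hy
  exact ⟨c + d, by simp [hc, hd, add_smul, Finset.sum_add_distrib]⟩

lemma Spn_smul {Δ : Finset V} (r : ℝ) {x : V} (hx : Spn Δ x) : Spn Δ (r • x) := by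
  obtain ⟨c, hc⟩ := hx
  exact ⟨fun v => r * c v, by simp [hc, Finset.smul_sum, mul_smul]⟩

lemma Spn_neg {Δ : Finset V} {x : V} (hx : Spn Δ x) : Spn Δ (-x) := by
  have := Spn_smul (-1) hx; simpa using this

lemma Spn_neg_iff {Δ : Finset V} {x : V} : Spn Δ (-x) ↔ Spn Δ x :=
  ⟨fun h => by simpa using Spn_neg h, Spn_neg⟩

lemma Spn_sub {Δ : Finset V} {x y : V} (hx : Spn Δ x) (hy : Spn Δ y) :
    Spn Δ (x - y) := by
  rw [sub_eq_add_neg]; exact Spn_add hx (Spn_neg hy)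

lemma Spn_mem {Δ : Finset V} {α : V} (h : α ∈ Δ) : Spn Δ α := by
  refine ⟨fun v => if v = α then 1 else 0, ?_⟩
  have : ∀ v ∈ Δ, (if v = α then (1:ℝ) else 0) • v = if v = α then v else 0 := by
    intro v _; split <;> simp
  rw [Finset.sum_congr rfl this, Finset.sum_ite_eq' Δ α (fun v => v)]
  simp [h]

lemma Spn_mono {Δ₁ Δ₂ : Finset V} (h : Δ₁ ⊆ Δ₂) {x : V} (hx : Spn Δ₁ x) :
    Spn Δ₂ x := by
  obtain ⟨c, hc⟩ := hx
  refine ⟨fun v => if v ∈ Δ₁ then c v else 0, ?_⟩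
  rw [hc, ← Finset.sum_subset h (fun v _ hv => by simp [hv])]
  exact Finset.sum_congr rfl fun v hv => by simp [hv]

lemma Spn_sum {Δ : Finset V} {s : Finset V} {g : V → ℝ} {f : V → V}
    (h : ∀ v ∈ s, Spn Δ (f v)) : Spn Δ (∑ v ∈ s, g v • f v) := by
  classical
  induction s using Finset.induction_on with
  | empty => simpa using Spn_zero Δ
  | @insert a s' hni ih =>
      rw [Finset.sum_insert hni]
      exact Spn_add (Spn_smul _ (h a (Finset.mem_insert_self a s')))
        (ih fun v hv => h v (Finset.mem_insert_of_mem hv))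

lemma NN_zero (Δ : Finset V) : NN Δ (0:V) := ⟨0, by simp, by simp⟩

lemma NN_add {Δ : Finset V} {x y : V} (hx : NN Δ x) (hy : NN Δ y) :
    NN Δ (x + y) := by
  obtain ⟨c, hc0, hc⟩ := hx; obtain ⟨d, hd0, hd⟩ := hy
  exact ⟨c + d, fun α hα => add_nonneg (hc0 α hα) (hd0 α hα),
    by simp [hc, hd, add_smul, Finset.sum_add_distrib]⟩

lemma NN_smul {Δ : Finset V} {r : ℝ} (hr : 0 ≤ r) {x : V} (hx : NN Δ x) :
    NN Δ (r • x) := by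
  obtain ⟨c, hc0, hc⟩ := hx
  exact ⟨fun v => r * c v, fun α hα => mul_nonneg hr (hc0 α hα),
    by simp [hc, Finset.smul_sum, mul_smul]⟩

lemma NN_sum {Δ : Finset V} {s : Finset V} {g : V → ℝ} {f : V → V}
    (hg : ∀ v ∈ s, 0 ≤ g v) (h : ∀ v ∈ s, NN Δ (f v)) :
    NN Δ (∑ v ∈ s, g v • f v) := by
  classical
  induction s using Finset.induction_on with
  | empty => simpa using NN_zero Δ
  | @insert a s' hni ih =>
      rw [Finset.sum_insert hni]
      exact NN_add (NN_smul (hg a (Finset.mem_insert_self a s')) (h a (Finset.mem_insert_self a s')))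
        (ih (fun v hv => hg v (Finset.mem_insert_of_mem hv)) (fun v hv => h v (Finset.mem_insert_of_mem hv)))

lemma NN_spn {Δ : Finset V} {x : V} (hx : NN Δ x) : Spn Δ x := by
  obtain ⟨c, _, hc⟩ := hx; exact ⟨c, hc⟩


section RS
variable {Φ Δ : Finset V}

lemma WP_mem_Phi (h : IsRS Φ Δ) {l : List V} (hl : ∀ a ∈ l, a ∈ Δ) {β : V}
    (hβ : β ∈ Φ) : WP l β ∈ Φ := by
  induction l with
  | nil => exact hβ
  | cons a t ih =>
      have ha : a ∈ Φ := h.simple_mem a (hl a List.mem_cons_self)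
      have ht : ∀ x ∈ t, x ∈ Δ := fun x hx => hl x (List.mem_cons_of_mem a hx)
      exact h.refl_mem a ha _ (ih ht)

lemma coeff_unique (h : IsRS Φ Δ) {c d : V → ℝ}
    (hcd : ∑ α ∈ Δ, c α • α = ∑ α ∈ Δ, d α • α) : ∀ α ∈ Δ, c α = d α := by
  classical
  intro α hα
  have hli := Fintype.linearIndependent_iff.mp h.simple_indep
  have hsum : ∑ a : {x // x ∈ Δ}, (c a.1 - d a.1) • (a.1 : V) = 0 := by
    rw [Finset.sum_congr rfl (fun a _ => sub_smul (c a.1) (d a.1) (a.1 : V)),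
      Finset.sum_sub_distrib]
    rw [Finset.univ_eq_attach, Finset.sum_attach Δ (fun x => c x • x),
      Finset.sum_attach Δ (fun x => d x • x), hcd, sub_self]
  have := hli (fun a => c a.1 - d a.1) hsum ⟨α, hα⟩
  linarith [this]

lemma zero_coeff (h : IsRS Φ Δ) {c : V → ℝ}
    (hc : ∑ α ∈ Δ, c α • α = 0) : ∀ α ∈ Δ, c α = 0 := by
  have : ∑ α ∈ Δ, c α • α = ∑ α ∈ Δ, (0:ℝ) • α := by simp [hc]
  exact coeff_unique h this

lemma mem_Pos_iff {Δ'' : Finset V} {β : V} :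
    β ∈ Pos Φ Δ'' ↔ β ∈ Φ ∧ NN Δ'' β := Finset.mem_filter

lemma NN_mono {Δ₁ Δ₂ : Finset V} (h : Δ₁ ⊆ Δ₂) {x : V} (hx : NN Δ₁ x) :
    NN Δ₂ x := by
  classical
  obtain ⟨c, hc0, hc⟩ := hx
  refine ⟨fun v => if v ∈ Δ₁ then c v else 0, fun α _ => ?_, ?_⟩
  · by_cases hv : α ∈ Δ₁
    · simpa [hv] using hc0 _ hv
    · simp [hv]
  rw [hc, ← Finset.sum_subset h (fun v _ hv => by simp [hv])]
  exact Finset.sum_congr rfl fun v hv => by simp [hv]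

lemma NN_mem {Δ'' : Finset V} {α : V} (hα : α ∈ Δ'') : NN Δ'' α := by
  classical
  refine ⟨fun v => if v = α then 1 else 0, fun v _ => by by_cases hv : v = α <;> simp [hv], ?_⟩
  have : ∀ v ∈ Δ'', (if v = α then (1:ℝ) else 0) • v = if v = α then v else 0 := by
    intro v _; split <;> simp
  rw [Finset.sum_congr rfl this, Finset.sum_ite_eq' Δ'' α (fun v => v)]
  simp [hα]

lemma pos_sub (h : IsRS Φ Δ) {Δ'' : Finset V} (hsub : Δ'' ⊆ Δ) {β : V} :
    β ∈ Pos Φ Δ'' ↔ β ∈ Pos Φ Δ ∧ Spn Δ'' β := by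
  classical
  constructor
  · rintro hm
    obtain ⟨hΦ, hNN⟩ := mem_Pos_iff.mp hm
    exact ⟨mem_Pos_iff.mpr ⟨hΦ, NN_mono hsub hNN⟩, NN_spn hNN⟩
  · rintro ⟨hm, d, hd⟩
    obtain ⟨hΦ, c, hc0, hc⟩ := mem_Pos_iff.mp hm
    have hd' : β = ∑ α ∈ Δ, (fun v => if v ∈ Δ'' then d v else 0) α • α := by
      rw [hd, ← Finset.sum_subset hsub (fun v _ hv => by simp [hv])]
      exact Finset.sum_congr rfl fun v hv => by simp [hv]
    have hcd := coeff_unique h (hc.symm.trans hd')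
    refine mem_Pos_iff.mpr ⟨hΦ, ⟨c, fun α hα => hc0 α (hsub hα), ?_⟩⟩
    rw [hc, ← Finset.sum_subset hsub (fun v hv hv' => ?_)]
    have : c v = 0 := by
      have := hcd v hv; simp [hv'] at this; exact this
    simp [this]

lemma not_both_pos (h : IsRS Φ Δ) {β : V} (hβ : β ∈ Φ) :
    ¬(β ∈ Pos Φ Δ ∧ -β ∈ Pos Φ Δ) := by
  rintro ⟨h1, h2⟩
  obtain ⟨_, c, hc0, hc⟩ := mem_Pos_iff.mp h1
  obtain ⟨_, d, hd0, hd⟩ := mem_Pos_iff.mp h2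
  have hsum : ∑ α ∈ Δ, (c + d) α • α = 0 := by
    simp only [Pi.add_apply, add_smul, Finset.sum_add_distrib, ← hc, ← hd]
    abel
  have hz := zero_coeff h hsum
  have : β = 0 := by
    rw [hc]
    apply Finset.sum_eq_zero
    intro α hα
    have h1 := hz α hα
    have h2 := hc0 α hα
    have h3 := hd0 α hα
    have : c α = 0 := by simp only [Pi.add_apply] at h1; linarith
    simp [this]
  exact h.zero_not_mem (this ▸ hβ)

lemma neg_pos_iff (h : IsRS Φ Δ) {β : V} (hβ : β ∈ Φ) :
    -β ∈ Pos Φ Δ ↔ β ∉ Pos Φ Δ := by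
  constructor
  · intro h1 h2; exact not_both_pos h hβ ⟨h2, h1⟩
  · intro h1
    rcases h.pos_or_neg β hβ with h2 | h2
    · exact absurd h2 h1
    · exact h2

lemma simple_pos (h : IsRS Φ Δ) {Δ'' : Finset V} (hsub : Δ'' ⊆ Δ) {α : V}
    (hα : α ∈ Δ'') : α ∈ Pos Φ Δ'' :=
  mem_Pos_iff.mpr ⟨h.simple_mem α (hsub hα), NN_mem hα⟩

lemma root_ne_zero (h : IsRS Φ Δ) {β : V} (hβ : β ∈ Φ) : β ≠ 0 :=
  fun h0 => h.zero_not_mem (h0 ▸ hβ)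

/-- key: a simple reflection permutes the positive roots other than itself -/
lemma sref_pos (h : IsRS Φ Δ) {α β : V} (hα : α ∈ Δ) (hβ : β ∈ Pos Φ Δ)
    (hne : β ≠ α) : sref α β ∈ Pos Φ Δ := by
  classical
  obtain ⟨hβΦ, c, hc0, hc⟩ := mem_Pos_iff.mp hβ
  have hαΦ : α ∈ Φ := h.simple_mem α hα
  -- find a simple root other than α with positive coefficient
  have hex : ∃ α' ∈ Δ, α' ≠ α ∧ 0 < c α' := by
    by_contra hno
    push_neg at hno
    have hzero : ∀ α' ∈ Δ, α' ≠ α → c α' = 0 := fun α' h1 h2 =>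
      le_antisymm (hno α' h1 h2) (hc0 α' h1)
    have hβα : β = c α • α := by
      rw [hc]
      rw [Finset.sum_eq_single_of_mem α hα (fun b hb hbne => by
        rw [hzero b hb hbne]; simp)]
    rcases h.reduced α hαΦ (c α) (by rw [← hβα]; exact hβΦ) with h1 | h1
    · exact hne (by rw [hβα, h1, one_smul])
    · have := hc0 α hα; rw [h1] at this; linarith
  obtain ⟨α', hα'Δ, hα'ne, hα'pos⟩ := hex
  have hsΦ : sref α β ∈ Φ := h.refl_mem α hαΦ β hβΦ
  rcases h.pos_or_neg _ hsΦ with h1 | h1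
  · exact h1
  · exfalso
    obtain ⟨_, d, hd0, hd⟩ := mem_Pos_iff.mp h1
    -- 0 = sref α β + (- sref α β) leads to coefficient contradiction
    set k := cpr β α with hk
    have hsum : ∑ v ∈ Δ, (fun v => c v + d v - (if v = α then k else 0)) v • v = 0 := by
      have h2 : ∑ v ∈ Δ, (if v = α then k else 0) • v = k • α := by
        have : ∀ v ∈ Δ, (if v = α then k else 0) • v = if v = α then k • v else 0 := by
          intro v _; split <;> simp
        rw [Finset.sum_congr rfl this, Finset.sum_ite_eq' Δ α (fun v => k • v)]
        simp [hα]
      simp only [sub_smul, add_smul, Finset.sum_sub_distrib, Finset.sum_add_distrib, h2, ← hc, ← hd]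
      have : -(sref α β) = -(β - k • α) := by rw [sref_apply]
      rw [this]; abel
    have := zero_coeff h hsum α' hα'Δ
    simp only [if_neg hα'ne] at this
    have := hd0 α' hα'Δ
    linarith

/-- relative version -/
lemma sref_pos_sub (h : IsRS Φ Δ) {Δ'' : Finset V} (hsub : Δ'' ⊆ Δ) {α β : V}
    (hα : α ∈ Δ'') (hβ : β ∈ Pos Φ Δ'') (hne : β ≠ α) :
    sref α β ∈ Pos Φ Δ'' := by
  obtain ⟨h1, h2⟩ := (pos_sub h hsub).mp hβ
  refine (pos_sub h hsub).mpr ⟨sref_pos h (hsub hα) h1 hne, ?_⟩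
  rw [sref_apply]
  exact Spn_sub h2 (Spn_smul _ (Spn_mem hα))

/-- words over Δ₁ preserve positive roots in span Δ₂ but not span Δ₁ -/
lemma WP_pres (h : IsRS Φ Δ) {Δ₁ Δ₂ : Finset V} (h12 : Δ₁ ⊆ Δ₂) (h2 : Δ₂ ⊆ Δ)
    {l : List V} (hl : ∀ a ∈ l, a ∈ Δ₁) {β : V} (hβ : β ∈ Pos Φ Δ)
    (hs : Spn Δ₂ β) (hn : ¬ Spn Δ₁ β) :
    WP l β ∈ Pos Φ Δ ∧ Spn Δ₂ (WP l β) ∧ ¬ Spn Δ₁ (WP l β) := by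
  induction l with
  | nil => exact ⟨hβ, hs, hn⟩
  | cons a t ih =>
      have ht : ∀ x ∈ t, x ∈ Δ₁ := fun x hx => hl x (List.mem_cons_of_mem a hx)
      have ha : a ∈ Δ₁ := hl a List.mem_cons_self
      obtain ⟨ih1, ih2, ih3⟩ := ih ht
      set β' := WP t β
      have hne : β' ≠ a := fun hh => ih3 (hh ▸ Spn_mem ha)
      rw [WP_cons]
      refine ⟨sref_pos h (h2 (h12 ha)) ih1 hne, ?_, ?_⟩
      · rw [Function.comp_apply, sref_apply]
        exact Spn_sub ih2 (Spn_smul _ (Spn_mem (h12 ha)))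
      · intro hsp
        apply ih3
        have : β' = sref a β' + cpr β' a • a := by rw [sref_apply]; abel
        rw [this]
        exact Spn_add hsp (Spn_smul _ (Spn_mem ha))

/-- inversion set relative to a sub simple system -/
def InvF (Φ Δ Δ'' : Finset V) (w : V → V) : Finset V :=
  (Pos Φ Δ'').filter (fun β => w β ∉ Pos Φ Δ)

lemma mem_InvF {Δ'' : Finset V} {w : V → V} {β : V} :
    β ∈ InvF Φ Δ Δ'' w ↔ β ∈ Pos Φ Δ'' ∧ w β ∉ Pos Φ Δ := Finset.mem_filter

lemma sref_inj (α : V) : Function.Injective (sref α) := by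
  intro x y hxy
  have := congrArg (sref α) hxy
  rwa [sref_sref, sref_sref] at this

/-- the key counting identity -/
lemma InvF_comp (h : IsRS Φ Δ) {Δ'' : Finset V} (hsub : Δ'' ⊆ Δ) {α : V}
    (hα : α ∈ Δ'') {l : List V} (hl : ∀ a ∈ l, a ∈ Δ) :
    InvF Φ Δ Δ'' (WP l ∘ sref α) =
      ((InvF Φ Δ Δ'' (WP l)).erase α).image (sref α) ∪
        (if WP l α ∈ Pos Φ Δ then {α} else ∅) := by
  classical
  have hαΦ : α ∈ Φ := h.simple_mem α (hsub hα)
  have hαpos : α ∈ Pos Φ Δ'' := simple_pos h hsub hα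
  have hαposΔ : α ∈ Pos Φ Δ := simple_pos h (le_refl Δ) (hsub hα)
  ext β
  simp only [Finset.mem_union, Finset.mem_image, Finset.mem_erase, mem_InvF]
  constructor
  · rintro ⟨hβpos, hneg⟩
    by_cases hba : β = α
    · subst hba
      right
      have h1 : WP l (sref β β) = - WP l β := by rw [sref_self, WP_neg]
      rw [Function.comp_apply, h1] at hneg
      have hβΦ : WP l β ∈ Φ := WP_mem_Phi h hl hαΦ
      have : WP l β ∈ Pos Φ Δ := by
        by_contra hc
        exact hneg ((neg_pos_iff h hβΦ).mpr hc)
      rw [if_pos this]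
      simp
    · left
      have hsβ : sref α β ∈ Pos Φ Δ'' := sref_pos_sub h hsub hα hβpos hba
      refine ⟨sref α β, ⟨?_, hsβ, ?_⟩, sref_sref α β⟩
      · intro hc
        -- sref α β = α → β = -α, impossible as β positive
        have : β = -α := by
          have := congrArg (sref α) hc
          rwa [sref_sref, sref_self] at this
        rw [this] at hβpos
        have hβposΔ : -α ∈ Pos Φ Δ := ((pos_sub h hsub).mp hβpos).1
        exact not_both_pos h hαΦ ⟨hαposΔ, hβposΔ⟩
      · exact hneg
  · rintro (⟨β', ⟨hne, hpos, hneg⟩, rfl⟩ | hin)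
    · refine ⟨sref_pos_sub h hsub hα hpos hne, ?_⟩
      rw [Function.comp_apply, sref_sref]
      exact hneg
    · by_cases hwα : WP l α ∈ Pos Φ Δ
      · rw [if_pos hwα] at hin
        have hβα : β = α := Finset.mem_singleton.mp hin
        subst hβα
        refine ⟨hαpos, ?_⟩
        rw [Function.comp_apply, sref_self, WP_neg]
        intro hc
        have hβΦ : WP l β ∈ Φ := WP_mem_Phi h hl hαΦ
        exact not_both_pos h hβΦ ⟨hwα, hc⟩
      · rw [if_neg hwα] at hin
        exact absurd hin (Finset.notMem_empty β)

lemma α_not_mem_image (h : IsRS Φ Δ) {Δ'' : Finset V} (hsub : Δ'' ⊆ Δ) {α : V}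
    (hα : α ∈ Δ'') (s : Finset V) (hs : s ⊆ Pos Φ Δ'') :
    α ∉ (s.erase α).image (sref α) := by
  intro hc
  obtain ⟨β', hβ', heq⟩ := Finset.mem_image.mp hc
  have hβ'' : β' = -α := by
    have := congrArg (sref α) heq
    rwa [sref_sref, sref_self] at this
  have h1 : β' ∈ Pos Φ Δ := ((pos_sub h hsub).mp (hs (Finset.mem_of_mem_erase hβ'))).1
  rw [hβ''] at h1
  have hαΦ : α ∈ Φ := h.simple_mem α (hsub hα)
  exact not_both_pos h hαΦ ⟨simple_pos h (le_refl Δ) (hsub hα), h1⟩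

/-- card goes up when `w α` positive -/
lemma InvF_card_up (h : IsRS Φ Δ) {Δ'' : Finset V} (hsub : Δ'' ⊆ Δ) {α : V}
    (hα : α ∈ Δ'') {l : List V} (hl : ∀ a ∈ l, a ∈ Δ)
    (hwα : WP l α ∈ Pos Φ Δ) :
    (InvF Φ Δ Δ'' (WP l ∘ sref α)).card = (InvF Φ Δ Δ'' (WP l)).card + 1 := by
  classical
  rw [InvF_comp h hsub hα hl, if_pos hwα]
  have hnotin : α ∉ InvF Φ Δ Δ'' (WP l) := by
    intro hc
    exact (mem_InvF.mp hc).2 hwα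
  have hdisj : Disjoint (((InvF Φ Δ Δ'' (WP l)).erase α).image (sref α)) {α} := by
    rw [Finset.disjoint_singleton_right]
    exact α_not_mem_image h hsub hα _ (Finset.filter_subset _ _)
  rw [Finset.card_union_of_disjoint hdisj,
    Finset.card_image_of_injective _ (sref_inj α),
    Finset.erase_eq_of_notMem hnotin, Finset.card_singleton]

/-- card goes down when `w α` negative -/
lemma InvF_card_down (h : IsRS Φ Δ) {Δ'' : Finset V} (hsub : Δ'' ⊆ Δ) {α : V}
    (hα : α ∈ Δ'') {l : List V} (hl : ∀ a ∈ l, a ∈ Δ)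
    (hwα : WP l α ∉ Pos Φ Δ) :
    (InvF Φ Δ Δ'' (WP l ∘ sref α)).card + 1 = (InvF Φ Δ Δ'' (WP l)).card := by
  classical
  rw [InvF_comp h hsub hα hl, if_neg hwα]
  have hin : α ∈ InvF Φ Δ Δ'' (WP l) :=
    mem_InvF.mpr ⟨simple_pos h hsub hα, hwα⟩
  rw [Finset.union_empty, Finset.card_image_of_injective _ (sref_inj α),
    Finset.card_erase_of_mem hin]
  have : 0 < (InvF Φ Δ Δ'' (WP l)).card := Finset.card_pos.mpr ⟨α, hin⟩
  omega

lemma InvF_id (h : IsRS Φ Δ) {Δ'' : Finset V} (hsub : Δ'' ⊆ Δ) :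
    InvF Φ Δ Δ'' (WP ([]:List V)) = ∅ := by
  classical
  rw [Finset.eq_empty_iff_forall_notMem]
  intro β hβ
  obtain ⟨h1, h2⟩ := mem_InvF.mp hβ
  exact h2 (((pos_sub h hsub).mp h1).1)

lemma isWord_iff {w : V → V} {n : ℕ} :
    IsWord Δ w n ↔ ∃ l : List V, l.length = n ∧ (∀ a ∈ l, a ∈ Δ) ∧ w = WP l :=
  Iff.rfl

lemma len_le {w : V → V} {n : ℕ} (hw : IsWord Δ w n) : len Δ w ≤ n :=
  Nat.sInf_le hw

lemma exists_reduced {w : V → V} (hw : w ∈ Weyl Δ) :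
    ∃ l : List V, (∀ a ∈ l, a ∈ Δ) ∧ w = WP l ∧ l.length = len Δ w := by
  have hne : {n | IsWord Δ w n}.Nonempty := hw
  have := Nat.sInf_mem hne
  obtain ⟨l, h1, h2, h3⟩ := isWord_iff.mp this
  exact ⟨l, h2, h3, h1⟩

lemma WP_mem_Weyl {l : List V} (hl : ∀ a ∈ l, a ∈ Δ) : WP l ∈ Weyl Δ :=
  ⟨l.length, l, rfl, hl, rfl⟩

lemma comp_sref_sref (w : V → V) (α : V) : (w ∘ sref α) ∘ sref α = w := by
  funext x; simp [Function.comp_apply, sref_sref]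

/-- exchange property -/
lemma exchange (h : IsRS Φ Δ) {l : List V} {α : V} (hl : ∀ a ∈ l, a ∈ Δ)
    (hα : α ∈ Δ) (hneg : WP l α ∉ Pos Φ Δ) :
    ∃ l' : List V, (∀ a ∈ l', a ∈ Δ) ∧ l'.length + 1 = l.length ∧
      WP l' = WP l ∘ sref α := by
  induction l with
  | nil =>
      exact absurd (simple_pos h (le_refl Δ) hα) hneg
  | cons a t ih =>
      have ha : a ∈ Δ := hl a List.mem_cons_self
      have ht : ∀ x ∈ t, x ∈ Δ := fun x hx => hl x (List.mem_cons_of_mem a hx)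
      by_cases hu : WP t α ∈ Pos Φ Δ
      · -- WP t α = a
        have hne : WP t α = a := by
          by_contra hne
          exact hneg (by
            rw [WP_cons, Function.comp_apply]
            exact sref_pos h ha hu hne)
        refine ⟨t, ht, by simp, ?_⟩
        rw [WP_cons, Function.comp_assoc, WP_conj t α, hne,
          ← Function.comp_assoc]
        funext x
        simp [Function.comp_apply, sref_sref]
      · obtain ⟨t', ht', hlen, heq⟩ := ih ht hu
        refine ⟨a :: t', fun x hx => ?_, by simp [← hlen], ?_⟩
        · rcases List.mem_cons.mp hx with rfl | hx
          · exact ha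
          · exact ht' x hx
        · rw [WP_cons, WP_cons, heq, Function.comp_assoc]

lemma len_comp_sref_ge (h : IsRS Φ Δ) {l : List V} (hl : ∀ a ∈ l, a ∈ Δ)
    {α : V} (hα : α ∈ Δ) :
    len Δ (WP l) ≤ len Δ (WP l ∘ sref α) + 1 := by
  have hmem : WP l ∘ sref α ∈ Weyl Δ := by
    have : WP l ∘ sref α = WP (l ++ [α]) := (WP_concat l α).symm
    rw [this]
    exact WP_mem_Weyl (fun a hx => by
      rcases List.mem_append.mp hx with hx | hx
      · exact hl a hx
      · rw [List.mem_singleton.mp hx]; exact hα)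
  obtain ⟨l', hl', heq, hlen⟩ := exists_reduced hmem
  have : WP l = WP (l' ++ [α]) := by
    rw [WP_concat, ← heq, comp_sref_sref]
  apply len_le
  exact isWord_iff.mpr ⟨l' ++ [α], by simp [hlen], fun a hx => by
    rcases List.mem_append.mp hx with hx | hx
    · exact hl' a hx
    · rw [List.mem_singleton.mp hx]; exact hα, this⟩

/-- the fundamental theorem: length equals number of inversions -/
lemma len_eq_card (h : IsRS Φ Δ) {w : V → V} (hw : w ∈ Weyl Δ) :
    len Δ w = (InvF Φ Δ Δ w).card := by
  classical
  generalize hn : len Δ w = n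
  induction n using Nat.strong_induction_on generalizing w with
  | _ n ih =>
      obtain ⟨l, hl, rfl, hlen⟩ := exists_reduced hw
      rcases List.eq_nil_or_concat l with rfl | ⟨t, α, rfl⟩
      · rw [InvF_id h (le_refl Δ)]
        simpa using hn ▸ hlen.symm
      · rw [List.concat_eq_append] at hl hw hn hlen ⊢
        have ha : α ∈ Δ := hl α (by simp)
        have ht : ∀ x ∈ t, x ∈ Δ := fun x hx => hl x (by simp [hx])
        have hαΦ : α ∈ Φ := h.simple_mem α ha
        have hwconc : WP (t ++ [α]) = WP t ∘ sref α := WP_concat t α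
        set w := WP (t ++ [α]) with hwdef
        have hwα_mem : w α ∈ Φ := WP_mem_Phi h hl hαΦ
        have huα : w α = - WP t α := by
          rw [hwconc, Function.comp_apply, sref_self, WP_neg]
        -- w α must be negative
        have hneg : w α ∉ Pos Φ Δ := by
          intro hwα
          have hu : WP t α ∉ Pos Φ Δ := by
            intro hc
            have : - WP t α ∈ Pos Φ Δ := huα ▸ hwα
            have htΦ : WP t α ∈ Φ := WP_mem_Phi h ht hαΦ
            exact not_both_pos h htΦ ⟨hc, this⟩
          obtain ⟨l', hl', hlen', heq⟩ := exchange h ht ha hu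
          have : WP l' = w := by rw [heq, hwconc.symm]
          have hle : len Δ w ≤ l'.length :=
            len_le (isWord_iff.mpr ⟨l', rfl, hl', this.symm⟩)
          have : l'.length + 1 = t.length := hlen'
          have hlen2 : t.length + 1 = len Δ w := by
            simpa using hlen
          omega
        -- so len of u := WP t is len w - 1
        have hulen_le : len Δ (WP t) ≤ t.length :=
          len_le (isWord_iff.mpr ⟨t, rfl, ht, rfl⟩)
        have hwu : w ∘ sref α = WP t := by
          rw [hwconc, comp_sref_sref]
        have hge : len Δ w ≤ len Δ (WP t) + 1 := by
          have := len_comp_sref_ge h hl (α := α) ha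
          -- len (w ∘ sref α) with w = WP (t ++ [α])
          rw [hwu] at this
          exact this
        have hlen2 : t.length + 1 = len Δ w := by simpa using hlen
        have hulen : len Δ (WP t) = len Δ w - 1 := by omega
        have hult : len Δ (WP t) < n := by omega
        have hucard := ih _ hult (WP_mem_Weyl ht) rfl
        -- apply counting formula with reduced word for u
        obtain ⟨lu, hlu, hueq, hlulen⟩ := exists_reduced (WP_mem_Weyl ht)
        have hupos : WP lu α ∈ Pos Φ Δ := by
          rw [← hueq]
          have : WP t α = - w α := by rw [huα]; simp
          rw [this]
          exact (neg_pos_iff h hwα_mem).mpr hneg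
        have hcard := InvF_card_up h (le_refl Δ) ha hlu hupos
        have hcomp : WP lu ∘ sref α = w := by
          rw [← hueq, ← hwu, comp_sref_sref]
        rw [hcomp, ← hueq] at hcard
        rw [← hn, hcard, ← hucard, hulen]
        omega

lemma invf_full (h : IsRS Φ Δ) {Δ'' : Finset V} {l : List V}
    (hk : (Pos Φ Δ'').card ≤ (InvF Φ Δ Δ'' (WP l)).card) :
    ∀ β ∈ Pos Φ Δ'', WP l β ∉ Pos Φ Δ := by
  have hsubs : InvF Φ Δ Δ'' (WP l) ⊆ Pos Φ Δ'' := Finset.filter_subset _ _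
  have heq : InvF Φ Δ Δ'' (WP l) = Pos Φ Δ'' :=
    Finset.eq_of_subset_of_card_le hsubs hk
  intro β hβ
  have : β ∈ InvF Φ Δ Δ'' (WP l) := heq ▸ hβ
  exact (mem_InvF.mp this).2

lemma exists_pos_image (h : IsRS Φ Δ) {Δ'' : Finset V} (hsub : Δ'' ⊆ Δ)
    {l : List V} (hl : ∀ a ∈ l, a ∈ Δ'') {β₀ : V} (hβ₀ : β₀ ∈ Pos Φ Δ'')
    (hgood : WP l β₀ ∈ Pos Φ Δ) :
    ∃ α ∈ Δ'', WP l α ∈ Pos Φ Δ := by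
  classical
  by_contra hno
  push_neg at hno
  have hlΔ : ∀ a ∈ l, a ∈ Δ := fun a ha => hsub (hl a ha)
  obtain ⟨hβΦ, c, hc0, hc⟩ := mem_Pos_iff.mp hβ₀
  have himgΦ : WP l β₀ ∈ Φ := WP_mem_Phi h hlΔ hβΦ
  have hneg : - WP l β₀ ∈ Pos Φ Δ := by
    refine mem_Pos_iff.mpr ⟨h.neg_mem _ himgΦ, ?_⟩
    have heq : - WP l β₀ = ∑ α ∈ Δ'', c α • (- WP l α) := by
      rw [hc, WP_sum]
      rw [← Finset.sum_neg_distrib]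
      exact Finset.sum_congr rfl fun α _ => by rw [smul_neg]
    rw [heq]
    refine NN_sum hc0 fun α hα => ?_
    have hαΦ : α ∈ Φ := h.simple_mem α (hsub hα)
    have : WP l α ∈ Φ := WP_mem_Phi h hlΔ hαΦ
    exact (mem_Pos_iff.mp ((neg_pos_iff h this).mpr (hno α hα))).2
  exact not_both_pos h himgΦ ⟨hgood, hneg⟩

lemma exists_longest (h : IsRS Φ Δ) {Δ'' : Finset V} (hsub : Δ'' ⊆ Δ) :
    ∃ l : List V, (∀ a ∈ l, a ∈ Δ'') ∧ ∀ β ∈ Pos Φ Δ'', WP l β ∉ Pos Φ Δ := by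
  classical
  suffices H : ∀ k (l : List V), (∀ a ∈ l, a ∈ Δ'') →
      (Pos Φ Δ'').card ≤ (InvF Φ Δ Δ'' (WP l)).card + k →
      ∃ l' : List V, (∀ a ∈ l', a ∈ Δ'') ∧
        ∀ β ∈ Pos Φ Δ'', WP l' β ∉ Pos Φ Δ by
    exact H (Pos Φ Δ'').card [] (by simp) (by omega)
  intro k
  induction k with
  | zero =>
      intro l hl hk
      exact ⟨l, hl, invf_full h (by omega)⟩
  | succ k ih =>
      intro l hl hk
      by_cases hfull : (Pos Φ Δ'').card ≤ (InvF Φ Δ Δ'' (WP l)).card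
      · exact ⟨l, hl, invf_full h hfull⟩
      · -- there is a positive root mapped to a positive root
        have hlt : (InvF Φ Δ Δ'' (WP l)).card < (Pos Φ Δ'').card := by omega
        have hne : InvF Φ Δ Δ'' (WP l) ≠ Pos Φ Δ'' := by
          intro hc; rw [hc] at hlt; omega
        have hssub : InvF Φ Δ Δ'' (WP l) ⊂ Pos Φ Δ'' :=
          (Finset.ssubset_iff_subset_ne).mpr ⟨Finset.filter_subset _ _, hne⟩
        obtain ⟨β₀, hβ₀, hβ₀n⟩ := Finset.exists_of_ssubset hssub
        have hgood : WP l β₀ ∈ Pos Φ Δ := by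
          by_contra hc
          exact hβ₀n (mem_InvF.mpr ⟨hβ₀, hc⟩)
        obtain ⟨α, hα, hwα⟩ := exists_pos_image h hsub hl hβ₀ hgood
        have hlΔ : ∀ a ∈ l, a ∈ Δ := fun a ha => hsub (hl a ha)
        have hcard := InvF_card_up h hsub hα hlΔ hwα
        have hl2 : ∀ a ∈ l ++ [α], a ∈ Δ'' := fun a ha => by
          rcases List.mem_append.mp ha with ha | ha
          · exact hl a ha
          · rw [List.mem_singleton.mp ha]; exact hα
        apply ih (l ++ [α]) hl2
        rw [WP_concat, hcard]
        omega

lemma cpr_sum {s : Finset V} {f : V → V} (γ : V) :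
    cpr (∑ v ∈ s, f v) γ = ∑ v ∈ s, cpr (f v) γ := by
  classical
  induction s using Finset.induction_on with
  | empty => simp [cpr_zero]
  | @insert a s' hni ih =>
      rw [Finset.sum_insert hni, Finset.sum_insert hni, cpr_add, ih]

lemma two_rho (Φ'' Δ'' : Finset V) :
    (2:ℝ) • rho Φ'' Δ'' = ∑ β ∈ Pos Φ'' Δ'', β := by
  rw [rho, smul_smul]
  norm_num

lemma cpr_int (h : IsRS Φ Δ) {δ γ : V} (hδ : δ ∈ Φ) (hγ : γ ∈ Φ) :
    ∃ k : ℤ, (k:ℝ) = cpr δ γ := h.cryst δ hδ γ hγ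

/-- if all roots have norm at most that of γ, pairings are at most 1 -/
lemma cpr_le_one (h : IsRS Φ Δ) {δ γ : V} (hδ : δ ∈ Φ) (hγ : γ ∈ Φ)
    (hnorm : ⟪δ, δ⟫ ≤ ⟪γ, γ⟫) (hne : δ ≠ γ) : cpr δ γ ≤ 1 := by
  obtain ⟨k, hk⟩ := cpr_int h hδ hγ
  have hγ0 : γ ≠ 0 := root_ne_zero h hγ
  have hγpos : (0:ℝ) < ⟪γ, γ⟫ := ips hγ0
  by_contra hgt
  push_neg at hgt
  have hk2 : (2:ℝ) ≤ cpr δ γ := by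
    have : (1:ℤ) < k := by exact_mod_cast hk ▸ hgt
    have : (2:ℤ) ≤ k := this
    calc (2:ℝ) = ((2:ℤ):ℝ) := by norm_num
    _ ≤ (k:ℝ) := by exact_mod_cast this
    _ = cpr δ γ := hk
  -- so ⟪δ,γ⟫ ≥ ⟪γ,γ⟫
  have h1 : ⟪γ, γ⟫ ≤ ⟪δ, γ⟫ := by
    have h2 : (2:ℝ) ≤ 2 * ⟪δ, γ⟫ / ⟪γ, γ⟫ := hk2
    have := (le_div_iff₀ hγpos).mp h2
    linarith
  have hCS : ⟪δ, γ⟫ ≤ ‖δ‖ * ‖γ‖ := real_inner_le_norm δ γ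
  have hδn : ‖δ‖ ≤ ‖γ‖ := by
    have h2 : ‖δ‖ * ‖δ‖ ≤ ‖γ‖ * ‖γ‖ := by
      rw [← real_inner_self_eq_norm_mul_norm, ← real_inner_self_eq_norm_mul_norm]
      exact hnorm
    nlinarith [norm_nonneg δ, norm_nonneg γ]
  have hγn : ‖γ‖ * ‖γ‖ = ⟪γ, γ⟫ := (real_inner_self_eq_norm_mul_norm γ).symm
  have hδγ : ⟪δ, γ⟫ = ⟪γ, γ⟫ := by nlinarith [norm_nonneg γ]
  have hδδ : ⟪δ, δ⟫ = ⟪γ, γ⟫ := by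
    have hδn2 : ‖δ‖ * ‖δ‖ ≤ ⟪δ, γ⟫ := by nlinarith [norm_nonneg γ, norm_nonneg δ]
    have : ⟪δ, δ⟫ ≤ ⟪δ, γ⟫ := by
      rw [real_inner_self_eq_norm_mul_norm]; exact hδn2
    nlinarith [hnorm, hδγ, real_inner_self_eq_norm_mul_norm δ]
  -- then δ = γ
  apply hne
  have : ⟪δ - γ, δ - γ⟫ = 0 := by
    rw [inner_sub_left, inner_sub_right, inner_sub_right]
    have hcomm : ⟪γ, δ⟫ = ⟪δ, γ⟫ := real_inner_comm δ γ
    linarith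
  have := inner_self_eq_zero.mp this
  rwa [sub_eq_zero] at this

lemma cpr_ge_neg_one (h : IsRS Φ Δ) {δ γ : V} (hδ : δ ∈ Φ) (hγ : γ ∈ Φ)
    (hnorm : ⟪δ, δ⟫ ≤ ⟪γ, γ⟫) (hne : δ ≠ -γ) : -1 ≤ cpr δ γ := by
  have hδ' : -δ ∈ Φ := h.neg_mem δ hδ
  have : cpr (-δ) γ ≤ 1 := by
    apply cpr_le_one h hδ' hγ
    · rw [inner_neg_left, inner_neg_right]; simpa using hnorm
    · intro hc
      apply hne
      rw [← neg_neg δ, hc]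
  rw [cpr_neg] at this
  linarith

/-- membership in the inversion set of `s_γ` forces positive pairing -/
lemma inv_sref_pos_pairing (h : IsRS Φ Δ) {γ : V} (hγpos : γ ∈ Pos Φ Δ)
    {β : V} (hβ : β ∈ InvF Φ Δ Δ (sref γ)) : 1 ≤ cpr β γ := by
  obtain ⟨hβpos, hβneg⟩ := mem_InvF.mp hβ
  have hβΦ : β ∈ Φ := (mem_Pos_iff.mp hβpos).1
  have hγΦ : γ ∈ Φ := (mem_Pos_iff.mp hγpos).1
  obtain ⟨k, hk⟩ := cpr_int h hβΦ hγΦ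
  have hpos : 0 < cpr β γ := by
    by_contra hle
    push_neg at hle
    apply hβneg
    have hsΦ : sref γ β ∈ Φ := h.refl_mem γ hγΦ β hβΦ
    refine mem_Pos_iff.mpr ⟨hsΦ, ?_⟩
    have : sref γ β = β + (- cpr β γ) • γ := by
      rw [sref_apply, neg_smul]; abel
    rw [this]
    exact NN_add (mem_Pos_iff.mp hβpos).2
      (NN_smul (by linarith) (mem_Pos_iff.mp hγpos).2)
  have : (0:ℤ) < k := by exact_mod_cast hk ▸ hpos
  have : (1:ℤ) ≤ k := this
  calc (1:ℝ) ≤ (k:ℝ) := by exact_mod_cast this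
  _ = cpr β γ := hk

lemma gamma_mem_inv (h : IsRS Φ Δ) {γ : V} (hγpos : γ ∈ Pos Φ Δ) :
    γ ∈ InvF Φ Δ Δ (sref γ) := by
  refine mem_InvF.mpr ⟨hγpos, ?_⟩
  rw [sref_self]
  intro hc
  exact not_both_pos h (mem_Pos_iff.mp hγpos).1 ⟨hγpos, hc⟩

/-- sum of all pairings of positive roots with γ equals card of inversion set of s_γ plus 1 -/
lemma quantum_sum (h : IsRS Φ Δ) {γ : V} (hγpos : γ ∈ Pos Φ Δ)
    (hmax : ∀ δ ∈ Φ, ⟪δ, δ⟫ ≤ ⟪γ, γ⟫) :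
    ∑ β ∈ Pos Φ Δ, cpr β γ = (InvF Φ Δ Δ (sref γ)).card + 1 := by
  classical
  have hγΦ : γ ∈ Φ := (mem_Pos_iff.mp hγpos).1
  have hγ0 : γ ≠ 0 := root_ne_zero h hγΦ
  have hsplit := Finset.sum_filter_add_sum_filter_not (Pos Φ Δ)
    (fun β => sref γ β ∉ Pos Φ Δ) (fun β => cpr β γ)
  have hA : (Pos Φ Δ).filter (fun β => sref γ β ∉ Pos Φ Δ) = InvF Φ Δ Δ (sref γ) := rfl
  -- second part sums to zero by the involution s_γ
  have hzero : ∑ β ∈ (Pos Φ Δ).filter (fun β => ¬ (sref γ β ∉ Pos Φ Δ)),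
      cpr β γ = 0 := by
    apply Finset.sum_involution (g := fun β _ => sref γ β)
    · intro β _
      rw [sref_apply, cpr_sub, cpr_smul, cpr_self hγ0]
      ring
    · intro β _ hne hc
      apply hne
      have : cpr β γ • γ = 0 := by
        have := congrArg (fun x => β - x) hc.symm
        simpa [sref_apply] using this.symm
      rcases smul_eq_zero.mp this with h1 | h1
      · rw [h1]
      · exact absurd h1 hγ0
    · intro β hβ
      simp only [Finset.mem_filter, not_not] at hβ ⊢
      exact ⟨hβ.2, by rw [sref_sref]; exact hβ.1⟩
    · intro β _
      exact sref_sref γ β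
  rw [hA] at hsplit
  rw [hzero, add_zero] at hsplit
  rw [← hsplit]
  -- each element of the inversion set pairs to 1 except γ which pairs to 2
  have hγinv : γ ∈ InvF Φ Δ Δ (sref γ) := gamma_mem_inv h hγpos
  rw [← Finset.sum_erase_add _ _ hγinv]
  have hone : ∀ β ∈ (InvF Φ Δ Δ (sref γ)).erase γ, cpr β γ = 1 := by
    intro β hβ
    have hβi := Finset.mem_of_mem_erase hβ
    have hβne := Finset.ne_of_mem_erase hβ
    have h1 := inv_sref_pos_pairing h hγpos hβi
    have hβΦ : β ∈ Φ := (mem_Pos_iff.mp (mem_InvF.mp hβi).1).1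
    have h2 := cpr_le_one h hβΦ hγΦ (hmax β hβΦ) hβne
    linarith
  rw [Finset.sum_congr rfl hone, Finset.sum_const, nsmul_eq_mul, mul_one,
    cpr_self hγ0, Finset.card_erase_of_mem hγinv]
  have : 0 < (InvF Φ Δ Δ (sref γ)).card := Finset.card_pos.mpr ⟨γ, hγinv⟩
  rw [Nat.cast_sub (by omega : 1 ≤ (InvF Φ Δ Δ (sref γ)).card)]
  push_cast
  ring

lemma sref_finsum (α : V) {s : Finset V} {f : V → V} :
    sref α (∑ v ∈ s, f v) = ∑ v ∈ s, sref α (f v) := by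
  classical
  induction s using Finset.induction_on with
  | empty => simp [sref_zero]
  | @insert a s' hni ih =>
      rw [Finset.sum_insert hni, Finset.sum_insert hni, sref_add, ih]

/-- the sum of positive roots -/
lemma sref_tr (h : IsRS Φ Δ) {α : V} (hα : α ∈ Δ) :
    sref α (∑ β ∈ Pos Φ Δ, β) = (∑ β ∈ Pos Φ Δ, β) - (2:ℝ) • α := by
  classical
  have hαpos : α ∈ Pos Φ Δ := simple_pos h (le_refl Δ) hα
  have hαΦ : α ∈ Φ := h.simple_mem α hα
  set S := (Pos Φ Δ).erase α with hS
  have hmaps : ∀ δ ∈ S, sref α δ ∈ S := by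
    intro δ hδ
    have hδpos := Finset.mem_of_mem_erase hδ
    have hδne := Finset.ne_of_mem_erase hδ
    refine Finset.mem_erase.mpr ⟨?_, sref_pos h hα hδpos hδne⟩
    intro hc
    have : δ = -α := by
      have := congrArg (sref α) hc
      rwa [sref_sref, sref_self] at this
    rw [this] at hδpos
    exact not_both_pos h hαΦ ⟨hαpos, hδpos⟩
  have himg : S.image (sref α) = S := by
    apply Finset.eq_of_subset_of_card_le
    · intro x hx
      obtain ⟨δ, hδ, rfl⟩ := Finset.mem_image.mp hx
      exact hmaps δ hδ
    · rw [Finset.card_image_of_injective _ (sref_inj α)]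
  have hsum_inv : ∑ δ ∈ S, sref α δ = ∑ δ ∈ S, δ := by
    conv_rhs => rw [← himg]
    rw [Finset.sum_image (fun x hx y hy hxy => sref_inj α hxy)]
  rw [← Finset.insert_erase hαpos, Finset.sum_insert (Finset.notMem_erase α _),
    sref_add, sref_self, ← hS, sref_finsum, hsum_inv]
  have h2s : (2:ℝ) • α = α + α := two_smul ℝ α
  rw [h2s]
  abel

lemma inner_tr_pos (h : IsRS Φ Δ) {α : V} (hα : α ∈ Δ) :
    0 < ⟪α, ∑ β ∈ Pos Φ Δ, β⟫ := by
  have hαΦ : α ∈ Φ := h.simple_mem α hα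
  have hα0 : α ≠ 0 := root_ne_zero h hαΦ
  have h1 := sref_tr h hα
  rw [sref_apply] at h1
  have h2 : cpr (∑ β ∈ Pos Φ Δ, β) α • α = (2:ℝ) • α := by
    have h' := congrArg (fun x => (∑ β ∈ Pos Φ Δ, β) - x) h1
    simp only [sub_sub_cancel] at h'
    exact h'
  have h3 : cpr (∑ β ∈ Pos Φ Δ, β) α = 2 := by
    by_contra hc
    have : (cpr (∑ β ∈ Pos Φ Δ, β) α - 2) • α = 0 := by
      rw [sub_smul, h2, sub_self]
    rcases smul_eq_zero.mp this with h4 | h4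
    · exact hc (by linarith [sub_eq_zero.mp h4])
    · exact hα0 h4
  have hq : (0:ℝ) < ⟪α, α⟫ := ips hα0
  unfold cpr at h3
  rw [div_eq_iff (ne_of_gt hq)] at h3
  rw [real_inner_comm]
  linarith

/-- every positive root's reflection is a word in simple reflections -/
lemma sref_mem_Weyl (h : IsRS Φ Δ) {β : V} (hβ : β ∈ Pos Φ Δ) :
    ∃ l : List V, (∀ a ∈ l, a ∈ Δ) ∧ sref β = WP l := by
  classical
  set tr := ∑ δ ∈ Pos Φ Δ, δ with htr
  set mh : V → ℕ := fun x => ((Pos Φ Δ).filter (fun δ => ⟪δ, tr⟫ < ⟪x, tr⟫)).card with hmh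
  generalize hn : mh β = n
  induction n using Nat.strong_induction_on generalizing β with
  | _ n ih =>
      by_cases hβΔ : β ∈ Δ
      · exact ⟨[β], fun a ha => by rwa [List.mem_singleton.mp ha], rfl⟩
      · obtain ⟨hβΦ, c, hc0, hc⟩ := mem_Pos_iff.mp hβ
        have hβ0 : β ≠ 0 := root_ne_zero h hβΦ
        have hself : (0:ℝ) < ⟪β, β⟫ := ips hβ0
        have hsum : ⟪β, β⟫ = ∑ α ∈ Δ, c α * ⟪β, α⟫ := by
          nth_rewrite 2 [hc]
          rw [inner_sum]
          exact Finset.sum_congr rfl fun α _ => by rw [real_inner_smul_right]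
        have hex : ∃ α ∈ Δ, 0 < c α * ⟪β, α⟫ := by
          by_contra hno
          push_neg at hno
          have : ⟪β, β⟫ ≤ 0 := hsum ▸ Finset.sum_nonpos hno
          linarith
        obtain ⟨α, hαΔ, hprod⟩ := hex
        have hβα : 0 < ⟪β, α⟫ := by
          rcases le_or_gt ⟪β, α⟫ 0 with h1 | h1
          · nlinarith [hc0 α hαΔ]
          · exact h1
        have hαΦ : α ∈ Φ := h.simple_mem α hαΔ
        have hα0 : α ≠ 0 := root_ne_zero h hαΦ
        have hk : 0 < cpr β α := by
          unfold cpr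
          have := ips hα0
          positivity
        have hβne : β ≠ α := fun hc => hβΔ (hc ▸ hαΔ)
        set β' := sref α β with hβ'
        have hβ'pos : β' ∈ Pos Φ Δ := sref_pos h hαΔ hβ hβne
        have hlt : ⟪β', tr⟫ < ⟪β, tr⟫ := by
          rw [hβ', sref_apply, inner_sub_left, real_inner_smul_left]
          have := inner_tr_pos h hαΔ
          nlinarith
        have hmhlt : mh β' < mh β := by
          apply Finset.card_lt_card
          rw [Finset.ssubset_iff_of_subset]
          · exact ⟨β', Finset.mem_filter.mpr ⟨hβ'pos, hlt⟩,
              fun hc => absurd (Finset.mem_filter.mp hc).2 (lt_irrefl _)⟩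
          · intro x hx
            obtain ⟨h1, h2⟩ := Finset.mem_filter.mp hx
            exact Finset.mem_filter.mpr ⟨h1, lt_trans h2 hlt⟩
        obtain ⟨l', hl', heq⟩ := ih (mh β') (hn ▸ hmhlt) hβ'pos rfl
        refine ⟨α :: (l' ++ [α]), ?_, ?_⟩
        · intro a ha
          rcases List.mem_cons.mp ha with rfl | ha
          · exact hαΔ
          · rcases List.mem_append.mp ha with ha | ha
            · exact hl' a ha
            · rwa [List.mem_singleton.mp ha]
        · have hββ' : β = sref α β' := by rw [hβ', sref_sref]
          have h2 : sref β = sref α ∘ sref β' ∘ sref α := by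
            rw [hββ']
            funext x
            have h3 := congrFun (sref_conj α β') (sref α x)
            simp only [Function.comp_apply, sref_sref] at h3
            exact h3.symm
          rw [h2, WP_cons, WP_concat, heq]

lemma sum_ite_coeff {Δ'' : Finset V} {α : V} (hα : α ∈ Δ'') (a : ℝ) :
    ∑ v ∈ Δ'', (if v = α then a else 0) • v = a • α := by
  classical
  have : ∀ v ∈ Δ'', (if v = α then a else 0) • v = if v = α then a • v else 0 := by
    intro v _; split <;> simp
  rw [Finset.sum_congr rfl this, Finset.sum_ite_eq' Δ'' α (fun v => a • v), if_pos hα]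

lemma simple_obtuse (h : IsRS Φ Δ) {α β : V} (hα : α ∈ Δ) (hβ : β ∈ Δ)
    (hne : α ≠ β) : ⟪α, β⟫ ≤ 0 := by
  classical
  by_contra hc
  push_neg at hc
  have hβΦ : β ∈ Φ := h.simple_mem β hβ
  have hαΦ : α ∈ Φ := h.simple_mem α hα
  have hβ0 : β ≠ 0 := root_ne_zero h hβΦ
  have hq : (0:ℝ) < ⟪β, β⟫ := ips hβ0
  set k := cpr α β with hk
  have hkpos : 0 < k := by
    rw [hk]; unfold cpr; positivity
  have hsΦ : sref β α ∈ Φ := h.refl_mem β hβΦ α hαΦ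
  have hrep : sref β α = ∑ v ∈ Δ, ((if v = α then (1:ℝ) else 0) + (if v = β then -k else 0)) • v := by
    rw [Finset.sum_congr rfl (fun v _ => add_smul _ _ v), Finset.sum_add_distrib,
      sum_ite_coeff hα 1, sum_ite_coeff hβ (-k), sref_apply, ← hk]
    rw [one_smul, neg_smul]
    abel
  rcases h.pos_or_neg _ hsΦ with hp | hp
  · obtain ⟨_, c, hc0, hcs⟩ := mem_Pos_iff.mp hp
    have := coeff_unique h (hcs.symm.trans hrep) β hβ
    rw [if_neg (Ne.symm hne), if_pos rfl] at this
    have := hc0 β hβ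
    linarith
  · obtain ⟨_, c, hc0, hcs⟩ := mem_Pos_iff.mp hp
    have hrep2 : - sref β α = ∑ v ∈ Δ, (-((if v = α then (1:ℝ) else 0) + (if v = β then -k else 0))) • v := by
      rw [hrep, ← Finset.sum_neg_distrib]
      exact Finset.sum_congr rfl fun v _ => (neg_smul _ v).symm
    have := coeff_unique h (hcs.symm.trans hrep2) α hα
    rw [if_pos rfl, if_neg hne] at this
    have := hc0 α hα
    linarith

lemma cpr_nonpos {x α : V} (hx : ⟪x, α⟫ ≤ 0) : cpr x α ≤ 0 := by
  unfold cpr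
  apply div_nonpos_of_nonpos_of_nonneg (by linarith) real_inner_self_nonneg

lemma pos_of_dual (h : IsRS Φ Δ) {γ ξ : V} (hγΦ : γ ∈ Φ)
    (hξ : ∀ α ∈ Δ, 0 ≤ ⟪α, ξ⟫) (hγξ : 0 < ⟪γ, ξ⟫) : γ ∈ Pos Φ Δ := by
  rcases h.pos_or_neg γ hγΦ with hp | hp
  · exact hp
  · exfalso
    obtain ⟨_, c, hc0, hcs⟩ := mem_Pos_iff.mp hp
    have h1 : ⟪-γ, ξ⟫ = ∑ α ∈ Δ, c α * ⟪α, ξ⟫ := by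
      rw [hcs, sum_inner]
      exact Finset.sum_congr rfl fun α _ => real_inner_smul_left _ _ _
    have h2 : (0:ℝ) ≤ ∑ α ∈ Δ, c α * ⟪α, ξ⟫ :=
      Finset.sum_nonneg fun α hα => mul_nonneg (hc0 α hα) (hξ α hα)
    rw [inner_neg_left] at h1
    linarith

/-- the master lemma about the distinguished root γ -/
lemma gamma_key (h : IsRS Φ Δ) {ι γ : V} (hι : ι ∈ Δ)
    (hγ : DistinguishedGamma Φ Δ ι γ) :
    γ ∈ Pos Φ Δ ∧ (∀ δ ∈ Φ, ⟪δ, δ⟫ ≤ ⟪γ, γ⟫) ∧ (∀ α ∈ Δ.erase ι, cpr α γ ≤ 0) := by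
  classical
  rcases hγ with ⟨hsl, hγι⟩ | ⟨n, hn, e, ⟨he, hΦs, hΔs⟩, hιe, hγe⟩ |
    ⟨n, hn, e, ⟨he, hΦs, hΔs⟩, hιe, hγe⟩
  · -- simply laced case, γ = ι
    subst hγι
    refine ⟨simple_pos h (le_refl Δ) hι, ?_, ?_⟩
    · intro δ hδ
      rw [hsl δ hδ γ (h.simple_mem γ hι)]
    · intro α hα
      have h1 := Finset.mem_of_mem_erase hα
      have h2 := Finset.ne_of_mem_erase hα
      exact cpr_nonpos (simple_obtuse h h1 hι h2)
  · -- type B case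
    have hval : ∀ i j : Fin n, ⟪e i, e j⟫ = if i = j then (1:ℝ) else 0 :=
      orthonormal_iff_ite.mp he
    set p : Fin n := ⟨n - 2, by omega⟩ with hp
    set q : Fin n := ⟨n - 1, by omega⟩ with hq
    have hpq : p ≠ q := by
      intro hc
      have := congrArg Fin.val hc
      simp [hp, hq] at this
      omega
    have hγγ : ⟪γ, γ⟫ = 2 := by
      rw [hγe]
      simp [inner_add_left, inner_add_right, hval, hpq, hpq.symm, -inner_self_eq_norm_sq_to_K]
      norm_num
    have hγΦ : γ ∈ Φ := by
      have : γ ∈ (Φ : Set V) := by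
        rw [hΦs]; left; exact ⟨p, q, hpq, Or.inr (Or.inl hγe)⟩
      exact Finset.mem_coe.mp this
    refine ⟨?_, ?_, ?_⟩
    · -- γ positive: use dual vector ξ := sum of first n-1 basis vectors
      set F : Finset (Fin n) := Finset.univ.filter (fun k : Fin n => (k:ℕ) < n - 1) with hF
      set ξ : V := ∑ k ∈ F, e k with hξ
      have hej : ∀ j : Fin n, ⟪e j, ξ⟫ = if (j:ℕ) < n - 1 then 1 else 0 := by
        intro j
        rw [hξ, inner_sum]
        have h1 : ∀ k ∈ F, ⟪e j, e k⟫ = if j = k then (1:ℝ) else 0 := fun k _ => hval j k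
        rw [Finset.sum_congr rfl h1, Finset.sum_ite_eq F j (fun _ => (1:ℝ))]
        simp [hF]
      apply pos_of_dual h hγΦ (ξ := ξ)
      · intro α hα
        have : α ∈ (Δ : Set V) := Finset.mem_coe.mpr hα
        rw [hΔs] at this
        rcases this with ⟨i, hi, rfl⟩ | ⟨h0, rfl⟩
        · rw [inner_sub_left, hej, hej]
          simp only []
          split_ifs <;> simp_all <;> omega
        · rw [hej]
          split_ifs <;> norm_num
      · rw [hγe, inner_add_left, hej, hej]
        have h1 : (p:ℕ) < n - 1 := by simp [hp]; omega
        rw [if_pos h1]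
        split_ifs <;> norm_num
    · -- norms
      intro δ hδ
      have : δ ∈ (Φ : Set V) := Finset.mem_coe.mpr hδ
      rw [hΦs] at this
      rw [hγγ]
      rcases this with ⟨i, j, hij, hv | hv | hv⟩ | ⟨i, hv | hv⟩ <;> subst hv
      · norm_num [inner_sub_left, inner_sub_right, hval, hij, hij.symm, -inner_self_eq_norm_sq_to_K]
      · norm_num [inner_add_left, inner_add_right, hval, hij, hij.symm, -inner_self_eq_norm_sq_to_K]
      · norm_num [inner_add_left, inner_add_right, inner_neg_left, inner_neg_right,
          hval, hij, hij.symm, -inner_self_eq_norm_sq_to_K]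
      · norm_num [hval, -inner_self_eq_norm_sq_to_K]
      · norm_num [inner_neg_left, inner_neg_right, hval, -inner_self_eq_norm_sq_to_K]
    · -- pairings of other simple roots with γ nonpositive
      intro α hα
      have hαΔ := Finset.mem_of_mem_erase hα
      have hαι := Finset.ne_of_mem_erase hα
      have : α ∈ (Δ : Set V) := Finset.mem_coe.mpr hαΔ
      rw [hΔs] at this
      rcases this with ⟨i, hi, rfl⟩ | ⟨h0, hv⟩
      · apply cpr_nonpos
        rw [hγe, inner_sub_left, inner_add_right, inner_add_right, hval, hval, hval, hval]
        have hiq : (i:ℕ) + 1 ≤ n - 1 := by omega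
        simp only [Fin.ext_iff, hp, hq, Fin.val_mk]
        split_ifs <;> (try (exfalso; omega)) <;> norm_num
      · exfalso
        apply hαι
        rw [hv, hιe]
  · -- type C case
    have hval : ∀ i j : Fin n, ⟪e i, e j⟫ = if i = j then (1:ℝ) else 0 :=
      orthonormal_iff_ite.mp he
    set p0 : Fin n := ⟨0, by omega⟩ with hp0
    have hγγ : ⟪γ, γ⟫ = 4 := by
      rw [hγe]
      rw [real_inner_smul_left, real_inner_smul_right, hval, if_pos rfl]
      norm_num
    have hγΦ : γ ∈ Φ := by
      have : γ ∈ (Φ : Set V) := by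
        rw [hΦs]; right; exact ⟨p0, Or.inl hγe⟩
      exact Finset.mem_coe.mp this
    refine ⟨?_, ?_, ?_⟩
    · apply pos_of_dual h hγΦ (ξ := e p0)
      · intro α hα
        have : α ∈ (Δ : Set V) := Finset.mem_coe.mpr hα
        rw [hΔs] at this
        rcases this with ⟨i, hi, rfl⟩ | ⟨h0, rfl⟩
        · rw [inner_sub_left, hval, hval]
          have : (⟨(i:ℕ) + 1, hi⟩ : Fin n) ≠ p0 := by
            intro hc; have := congrArg Fin.val hc; simp [hp0] at this
          rw [if_neg this]
          split_ifs <;> norm_num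
        · rw [real_inner_smul_left, hval]
          split_ifs <;> norm_num
      · rw [hγe, real_inner_smul_left, hval, if_pos rfl]
        norm_num
    · intro δ hδ
      have : δ ∈ (Φ : Set V) := Finset.mem_coe.mpr hδ
      rw [hΦs] at this
      rw [hγγ]
      rcases this with ⟨i, j, hij, hv | hv | hv⟩ | ⟨i, hv | hv⟩ <;> subst hv
      · norm_num [inner_sub_left, inner_sub_right, hval, hij, hij.symm, -inner_self_eq_norm_sq_to_K]
      · norm_num [inner_add_left, inner_add_right, hval, hij, hij.symm, -inner_self_eq_norm_sq_to_K]
      · norm_num [inner_add_left, inner_add_right, inner_neg_left, inner_neg_right,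
          hval, hij, hij.symm, -inner_self_eq_norm_sq_to_K]
      · rw [real_inner_smul_left, real_inner_smul_right, hval, if_pos rfl]; norm_num
      · rw [inner_neg_left, inner_neg_right, real_inner_smul_left,
          real_inner_smul_right, hval, if_pos rfl]; norm_num
    · intro α hα
      have hαΔ := Finset.mem_of_mem_erase hα
      have hαι := Finset.ne_of_mem_erase hα
      have : α ∈ (Δ : Set V) := Finset.mem_coe.mpr hαΔ
      rw [hΔs] at this
      rcases this with ⟨i, hi, rfl⟩ | ⟨h0, rfl⟩
      · have hine : (i:ℕ) ≠ 0 := by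
          intro hc
          apply hαι
          rw [hιe]
          have h1 : e i = e ⟨0, by omega⟩ := by
            congr 1; exact Fin.ext (by simp [hc])
          have h2 : e ⟨(i:ℕ) + 1, hi⟩ = e ⟨1, by omega⟩ := by
            congr 1; exact Fin.ext (by simp [hc])
          rw [h1, h2]
        apply cpr_nonpos
        rw [hγe, real_inner_smul_right, inner_sub_left, hval, hval]
        have h1 : i ≠ p0 := fun hc => hine (by simp [hc, hp0])
        have h2 : (⟨(i:ℕ) + 1, hi⟩ : Fin n) ≠ p0 := by
          intro hc; have := congrArg Fin.val hc; simp [hp0] at this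
        rw [if_neg h1, if_neg h2]
        norm_num
      · apply cpr_nonpos
        rw [hγe, real_inner_smul_left, real_inner_smul_right, hval]
        have : (⟨n - 1, by omega⟩ : Fin n) ≠ p0 := by
          intro hc; have := congrArg Fin.val hc; simp [hp0] at this; omega
        rw [if_neg this]
        norm_num

lemma WP_spn {Δ₁ : Finset V} {l : List V} (hl : ∀ a ∈ l, a ∈ Δ₁) (x : V) :
    Spn Δ₁ (WP l x - x) := by
  induction l with
  | nil => rw [WP_nil]; simp; exact Spn_zero Δ₁
  | cons a t ih =>
      have ha : a ∈ Δ₁ := hl a List.mem_cons_self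
      have ht : ∀ y ∈ t, y ∈ Δ₁ := fun y hy => hl y (List.mem_cons_of_mem a hy)
      have : WP (a :: t) x - x =
          (sref a (WP t x) - WP t x) + (WP t x - x) := by
        rw [WP_cons]; simp
      rw [this]
      refine Spn_add ?_ (ih ht)
      rw [sref_apply]
      have : WP t x - cpr (WP t x) a • a - WP t x = (- cpr (WP t x) a) • a := by
        rw [neg_smul]; abel
      rw [this]
      exact Spn_smul _ (Spn_mem ha)

end RS

end Pq
end Aux
open Pp in
/-- Lemma 9: for `w_{P/Q}`, the longest element of `W_P` that is a minimal
length representative of its coset `w_{P/Q} W_Q`: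
(1) `Inv(w_{P/Q}) = R_P^+ \ R_Q^+`;
(2) `ℓ(w_{P/Q}) = ⟨-2ρ_P, γ^∨⟩`;
(3) `ℓ(w_{P/Q} s_γ) = ℓ(w_{P/Q}) + ℓ(s_γ) = ⟨2(ρ - ρ_P), γ^∨⟩ - 1`. -/
theorem stmt9 {V : Type*} [NormedAddCommGroup V] [InnerProductSpace ℝ V]
    (Φ Δ : Finset V) (hRS : IsRS Φ Δ) (ι : V) (hι : ι ∈ Δ)
    (hmin : Minuscule Φ Δ ι)
    (γ : V) (hγ : DistinguishedGamma Φ Δ ι γ)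
    (wPQ : V → V)
    (hwPQ : wPQ ∈ Weyl (Δ.erase ι))
    (hminQ : ∀ β ∈ Pos Φ ((Δ.erase ι).filter fun j => cpr j γ = 0),
        wPQ β ∈ Pos Φ Δ)
    (hlongest : ∀ u ∈ Weyl (Δ.erase ι),
        (∀ β ∈ Pos Φ ((Δ.erase ι).filter fun j => cpr j γ = 0), u β ∈ Pos Φ Δ) →
        len Δ u ≤ len Δ wPQ) :
    (∀ β ∈ Pos Φ Δ, (-(wPQ β) ∈ Pos Φ Δ ↔
        (β ∈ Pos Φ (Δ.erase ι) ∧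
         β ∉ Pos Φ ((Δ.erase ι).filter fun j => cpr j γ = 0)))) ∧
    ((len Δ wPQ : ℝ) = cpr (-((2:ℝ) • rho Φ (Δ.erase ι))) γ) ∧
    (len Δ (wPQ ∘ sref γ) = len Δ wPQ + len Δ (sref γ) ∧
     (len Δ (wPQ ∘ sref γ) : ℝ) =
        cpr ((2:ℝ) • (rho Φ Δ - rho Φ (Δ.erase ι))) γ - 1) := by
  classical
  open Pq in
  set Δ' := Δ.erase ι with hΔ'
  set IQ := Δ'.filter (fun j => cpr j γ = 0) with hIQ
  obtain ⟨hγpos, hmax, hK4⟩ := Pq.gamma_key hRS hι hγ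
  have hγΦ : γ ∈ Φ := (Pq.mem_Pos_iff.mp hγpos).1
  have hγ0 : γ ≠ 0 := Pq.root_ne_zero hRS hγΦ
  have hΔ'sub : Δ' ⊆ Δ := Finset.erase_subset ι Δ
  have hIQΔ' : IQ ⊆ Δ' := Finset.filter_subset _ _
  have hIQΔ : IQ ⊆ Δ := fun x hx => hΔ'sub (hIQΔ' hx)
  -- pairing with γ vanishes on Pos IQ
  have hK1 : ∀ β ∈ Pos Φ IQ, cpr β γ = 0 := by
    intro β hβ
    obtain ⟨hβΦ, c, hc0, hceq⟩ := Pq.mem_Pos_iff.mp hβ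
    rw [hceq, Pq.cpr_sum]
    apply Finset.sum_eq_zero
    intro α hα
    rw [Pq.cpr_smul]
    have h0 : cpr α γ = 0 := by
      rw [hIQ] at hα
      exact (Finset.mem_filter.mp hα).2
    rw [h0, mul_zero]
  -- pairing with γ is -1 on Pos Δ' \ Pos IQ
  have hK2 : ∀ β ∈ Pos Φ Δ', β ∉ Pos Φ IQ → cpr β γ = -1 := by
    intro β hβ' hβn
    obtain ⟨hβΦ, c, hc0, hceq⟩ := Pq.mem_Pos_iff.mp hβ'
    have hβΔpos : β ∈ Pos Φ Δ := ((Pq.pos_sub hRS hΔ'sub).mp hβ').1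
    have hsumle : cpr β γ ≤ 0 := by
      rw [hceq, Pq.cpr_sum]
      apply Finset.sum_nonpos
      intro α hα
      rw [Pq.cpr_smul]
      have h1 := hc0 α hα
      have h2 := hK4 α hα
      nlinarith
    have hneg : β ≠ -γ := by
      intro hc
      have hnb : -β ∈ Pos Φ Δ := by rw [hc, neg_neg]; exact hγpos
      exact Pq.not_both_pos hRS hβΦ ⟨hβΔpos, hnb⟩
    have hge := Pq.cpr_ge_neg_one hRS hβΦ hγΦ (hmax β hβΦ) hneg
    obtain ⟨k, hk⟩ := Pq.cpr_int hRS hβΦ hγΦ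
    have hk0 : k = 0 ∨ k = -1 := by
      have h1 : (k:ℝ) ≤ 0 := hk ▸ hsumle
      have h2 : (-1:ℝ) ≤ (k:ℝ) := by rw [hk]; exact hge
      have h1' : k ≤ 0 := by exact_mod_cast h1
      have h2' : (-1:ℤ) ≤ k := by exact_mod_cast h2
      omega
    rcases hk0 with hk0 | hk0
    · exfalso
      apply hβn
      have hcpr0 : cpr β γ = 0 := by rw [← hk, hk0]; norm_num
      have hterms : ∀ α ∈ Δ', c α * cpr α γ = 0 := by
        have hsz : ∑ α ∈ Δ', c α * cpr α γ = 0 := by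
          have : cpr β γ = ∑ α ∈ Δ', c α * cpr α γ := by
            rw [hceq, Pq.cpr_sum]
            exact Finset.sum_congr rfl fun α _ => Pq.cpr_smul _ _ _
          rw [← this, hcpr0]
        intro α hα
        have hnp : ∀ α ∈ Δ', c α * cpr α γ ≤ 0 := by
          intro α' hα'
          have h1 := hc0 α' hα'
          have h2 := hK4 α' hα'
          nlinarith
        exact (Finset.sum_eq_zero_iff_of_nonpos hnp).mp hsz α hα
      refine Pq.mem_Pos_iff.mpr ⟨hβΦ, ⟨c, fun α hα => hc0 α (hIQΔ' hα), ?_⟩⟩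
      rw [hceq]
      apply (Finset.sum_subset hIQΔ' ?_).symm
      intro α hα hαn
      have hcne : cpr α γ ≠ 0 := by
        intro hc
        apply hαn
        rw [hIQ]
        exact Finset.mem_filter.mpr ⟨hα, hc⟩
      have := hterms α hα
      have hc0' : c α = 0 := by
        rcases mul_eq_zero.mp this with h' | h'
        · exact h'
        · exact absurd h' hcne
      rw [hc0', zero_smul]
    · rw [← hk, hk0]; norm_num
  have hIQsubP : Pos Φ IQ ⊆ Pos Φ Δ' := by
    intro β hβ
    obtain ⟨h1, h2⟩ := (Pq.pos_sub hRS hIQΔ).mp hβ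
    exact (Pq.pos_sub hRS hΔ'sub).mpr ⟨h1, Pq.Spn_mono hIQΔ' h2⟩
  set S := Pos Φ Δ' \ Pos Φ IQ with hSdef
  -- word for wPQ
  obtain ⟨m, lw, hlwlen, hlw, hweqraw⟩ := hwPQ
  have hweq : wPQ = Pq.WP lw := hweqraw
  have hlwΔ : ∀ a ∈ lw, a ∈ Δ := fun a ha => hΔ'sub (hlw a ha)
  have hwPQΔ : wPQ ∈ Weyl Δ := by rw [hweq]; exact Pq.WP_mem_Weyl hlwΔ
  -- the inversion set of wPQ is contained in S
  have hInvsub : Pq.InvF Φ Δ Δ wPQ ⊆ S := by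
    intro β hβ
    obtain ⟨hβpos, hβneg⟩ := Pq.mem_InvF.mp hβ
    have hspn : Pq.Spn Δ' β := by
      by_contra hns
      apply hβneg
      rw [hweq]
      exact (Pq.WP_pres hRS hΔ'sub (le_refl Δ) hlw hβpos
        (Pq.NN_spn (Pq.mem_Pos_iff.mp hβpos).2) hns).1
    have hβΔ' : β ∈ Pos Φ Δ' := (Pq.pos_sub hRS hΔ'sub).mpr ⟨hβpos, hspn⟩
    refine Finset.mem_sdiff.mpr ⟨hβΔ', fun hβIQ => ?_⟩
    exact hβneg (hminQ β hβIQ)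
  -- construct the longest coset representative u explicitly
  obtain ⟨l1, hl1, hl1prop⟩ := Pq.exists_longest hRS hΔ'sub
  obtain ⟨l2, hl2, hl2prop⟩ := Pq.exists_longest hRS hIQΔ
  have hl12Δ' : ∀ a ∈ l1 ++ l2, a ∈ Δ' := by
    intro a ha
    rcases List.mem_append.mp ha with ha | ha
    · exact hl1 a ha
    · exact hIQΔ' (hl2 a ha)
  have hl12Δ : ∀ a ∈ l1 ++ l2, a ∈ Δ := fun a ha => hΔ'sub (hl12Δ' a ha)
  set u := Pq.WP (l1 ++ l2) with hu
  have huapp : ∀ x, u x = Pq.WP l1 (Pq.WP l2 x) := by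
    intro x
    rw [hu, Pq.WP_append]
    rfl
  have huIQ : ∀ β ∈ Pos Φ IQ, u β ∈ Pos Φ Δ := by
    intro β hβ
    have hβΔ' : β ∈ Pos Φ Δ' := hIQsubP hβ
    have hβΔpos : β ∈ Pos Φ Δ := ((Pq.pos_sub hRS hΔ'sub).mp hβΔ').1
    have hβΦ : β ∈ Φ := (Pq.mem_Pos_iff.mp hβΔpos).1
    have h2 : Pq.WP l2 β ∉ Pos Φ Δ := hl2prop β hβ
    have h2Φ : Pq.WP l2 β ∈ Φ :=
      Pq.WP_mem_Phi hRS (fun a ha => hIQΔ (hl2 a ha)) hβΦ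
    have h2neg : -(Pq.WP l2 β) ∈ Pos Φ Δ := (Pq.neg_pos_iff hRS h2Φ).mpr h2
    have h2spn : Pq.Spn IQ (Pq.WP l2 β) := by
      have hd := Pq.WP_spn hl2 β
      have heq2 : Pq.WP l2 β = (Pq.WP l2 β - β) + β := by abel
      rw [heq2]
      exact Pq.Spn_add hd (Pq.NN_spn (Pq.mem_Pos_iff.mp hβ).2)
    have h2negIQ : -(Pq.WP l2 β) ∈ Pos Φ IQ :=
      (Pq.pos_sub hRS hIQΔ).mpr ⟨h2neg, Pq.Spn_neg h2spn⟩
    have h3 : Pq.WP l1 (-(Pq.WP l2 β)) ∉ Pos Φ Δ := hl1prop _ (hIQsubP h2negIQ)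
    have h3Φ : Pq.WP l1 (-(Pq.WP l2 β)) ∈ Φ :=
      Pq.WP_mem_Phi hRS (fun a ha => hΔ'sub (hl1 a ha)) (hRS.neg_mem _ h2Φ)
    have h4 : u β = -(Pq.WP l1 (-(Pq.WP l2 β))) := by
      rw [huapp, Pq.WP_neg, neg_neg]
    rw [h4]
    exact (Pq.neg_pos_iff hRS h3Φ).mpr h3
  have hInvu : Pq.InvF Φ Δ Δ u = S := by
    ext β
    rw [Pq.mem_InvF, hSdef, Finset.mem_sdiff]
    constructor
    · rintro ⟨hβpos, hβneg⟩
      have hspn : Pq.Spn Δ' β := by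
        by_contra hns
        apply hβneg
        exact (Pq.WP_pres hRS hΔ'sub (le_refl Δ) hl12Δ' hβpos
          (Pq.NN_spn (Pq.mem_Pos_iff.mp hβpos).2) hns).1
      have hβΔ' : β ∈ Pos Φ Δ' := (Pq.pos_sub hRS hΔ'sub).mpr ⟨hβpos, hspn⟩
      exact ⟨hβΔ', fun hβIQ => hβneg (huIQ β hβIQ)⟩
    · rintro ⟨hβΔ', hβIQ⟩
      have hβpos : β ∈ Pos Φ Δ := ((Pq.pos_sub hRS hΔ'sub).mp hβΔ').1
      refine ⟨hβpos, ?_⟩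
      have hnspn : ¬ Pq.Spn IQ β := fun hs =>
        hβIQ ((Pq.pos_sub hRS hIQΔ).mpr ⟨hβpos, hs⟩)
      have hw2 := Pq.WP_pres hRS hIQΔ' hΔ'sub hl2 hβpos
        ((Pq.pos_sub hRS hΔ'sub).mp hβΔ').2 hnspn
      have hw2Δ' : Pq.WP l2 β ∈ Pos Φ Δ' :=
        (Pq.pos_sub hRS hΔ'sub).mpr ⟨hw2.1, hw2.2.1⟩
      rw [huapp]
      exact hl1prop _ hw2Δ'
  have huWeylΔ : u ∈ Weyl Δ := Pq.WP_mem_Weyl hl12Δ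
  have huWeylΔ' : u ∈ Weyl Δ' := Pq.WP_mem_Weyl hl12Δ'
  have hulen : len Δ u = S.card := by
    rw [Pq.len_eq_card hRS huWeylΔ, hInvu]
  have hull : len Δ u ≤ len Δ wPQ := hlongest u huWeylΔ' huIQ
  have hwlen : len Δ wPQ = (Pq.InvF Φ Δ Δ wPQ).card := Pq.len_eq_card hRS hwPQΔ
  have hInv_eq : Pq.InvF Φ Δ Δ wPQ = S := by
    apply Finset.eq_of_subset_of_card_le hInvsub
    omega
  have hlenS : len Δ wPQ = S.card := by rw [hwlen, hInv_eq]
  -- part 1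
  have part1 : ∀ β ∈ Pos Φ Δ,
      (-(wPQ β) ∈ Pos Φ Δ ↔ (β ∈ Pos Φ Δ' ∧ β ∉ Pos Φ IQ)) := by
    intro β hβ
    have hwβΦ : wPQ β ∈ Φ := by
      rw [hweq]
      exact Pq.WP_mem_Phi hRS hlwΔ (Pq.mem_Pos_iff.mp hβ).1
    rw [Pq.neg_pos_iff hRS hwβΦ]
    constructor
    · intro hneg
      have hmem : β ∈ Pq.InvF Φ Δ Δ wPQ := Pq.mem_InvF.mpr ⟨hβ, hneg⟩
      rw [hInv_eq, hSdef] at hmem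
      exact Finset.mem_sdiff.mp hmem
    · rintro ⟨h1, h2⟩
      have hmem : β ∈ S := by rw [hSdef]; exact Finset.mem_sdiff.mpr ⟨h1, h2⟩
      rw [← hInv_eq] at hmem
      exact (Pq.mem_InvF.mp hmem).2
  -- part 2
  have hsumS : ∑ β ∈ S, cpr β γ = -(S.card : ℝ) := by
    rw [Finset.sum_congr rfl (fun β hβ =>
      hK2 β (Finset.mem_sdiff.mp hβ).1 (Finset.mem_sdiff.mp hβ).2)]
    simp
    rfl
  have hsumIQ : ∑ β ∈ Pos Φ IQ, cpr β γ = 0 :=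
    Finset.sum_eq_zero (fun β hβ => hK1 β hβ)
  have hsum2 : ∑ β ∈ Pos Φ Δ', cpr β γ = -(S.card : ℝ) := by
    rw [← Finset.sum_sdiff hIQsubP, ← hSdef, hsumS, hsumIQ, add_zero]
  have hrhoΔ' : cpr ((2:ℝ) • rho Φ Δ') γ = -(S.card : ℝ) := by
    rw [Pq.two_rho]
    rw [show cpr (∑ β ∈ Pos Φ Δ', β) γ = ∑ β ∈ Pos Φ Δ', cpr β γ from
      Pq.cpr_sum (f := fun v => v) γ]
    exact hsum2
  have part2 : (len Δ wPQ : ℝ) = cpr (-((2:ℝ) • rho Φ Δ')) γ := by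
    rw [Pq.cpr_neg, hrhoΔ', hlenS, neg_neg]
  -- part 3
  obtain ⟨lγ, hlγ, hsγeq⟩ := Pq.sref_mem_Weyl hRS hγpos
  have hsγWeyl : sref γ ∈ Weyl Δ := by rw [hsγeq]; exact Pq.WP_mem_Weyl hlγ
  have hcompWeyl : wPQ ∘ sref γ ∈ Weyl Δ := by
    rw [hweq, hsγeq, ← Pq.WP_append]
    apply Pq.WP_mem_Weyl
    intro a ha
    rcases List.mem_append.mp ha with ha | ha
    · exact hlwΔ a ha
    · exact hlγ a ha
  set A := Pq.InvF Φ Δ Δ (sref γ) with hA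
  have hcompInv : Pq.InvF Φ Δ Δ (wPQ ∘ sref γ) =
      A ∪ (Pq.InvF Φ Δ Δ wPQ).image (sref γ) := by
    ext β
    rw [Pq.mem_InvF, Finset.mem_union, Finset.mem_image]
    constructor
    · rintro ⟨hβpos, hβneg⟩
      by_cases hβA : sref γ β ∈ Pos Φ Δ
      · right
        refine ⟨sref γ β, Pq.mem_InvF.mpr ⟨hβA, ?_⟩, Pq.sref_sref γ β⟩
        exact hβneg
      · left
        rw [hA, Pq.mem_InvF]
        exact ⟨hβpos, hβA⟩
    · rintro (h1 | ⟨β', hβ', rfl⟩)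
      · rw [hA, Pq.mem_InvF] at h1
        obtain ⟨h1, h2⟩ := h1
        refine ⟨h1, ?_⟩
        have hsβΦ : sref γ β ∈ Φ := hRS.refl_mem γ hγΦ β (Pq.mem_Pos_iff.mp h1).1
        have hnegpos : -(sref γ β) ∈ Pos Φ Δ := (Pq.neg_pos_iff hRS hsβΦ).mpr h2
        have hnA : -(sref γ β) ∈ Pq.InvF Φ Δ Δ (sref γ) := by
          refine Pq.mem_InvF.mpr ⟨hnegpos, ?_⟩
          rw [Pq.sref_neg, Pq.sref_sref]
          intro hc
          exact Pq.not_both_pos hRS (Pq.mem_Pos_iff.mp h1).1 ⟨h1, hc⟩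
        have hnS : -(sref γ β) ∉ Pq.InvF Φ Δ Δ wPQ := by
          rw [hInv_eq]
          intro hc
          have hc1 := hK2 _ (Finset.mem_sdiff.mp hc).1 (Finset.mem_sdiff.mp hc).2
          have hc2 := Pq.inv_sref_pos_pairing hRS hγpos hnA
          linarith
        have h5 : wPQ (-(sref γ β)) ∈ Pos Φ Δ := by
          by_contra hcc
          exact hnS (Pq.mem_InvF.mpr ⟨hnegpos, hcc⟩)
        have h6 : wPQ (sref γ β) = -(wPQ (-(sref γ β))) := by
          rw [hweq, Pq.WP_neg, neg_neg]
        rw [Function.comp_apply, h6]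
        intro hcc
        have hΦ5 : wPQ (-(sref γ β)) ∈ Φ := by
          rw [hweq]
          exact Pq.WP_mem_Phi hRS hlwΔ (hRS.neg_mem _ hsβΦ)
        exact Pq.not_both_pos hRS hΦ5 ⟨h5, hcc⟩
      · obtain ⟨hβ'pos, hβ'neg⟩ := Pq.mem_InvF.mp hβ'
        have hβ'S : β' ∈ S := by rw [← hInv_eq]; exact hβ'
        have hcprβ' : cpr β' γ = -1 :=
          hK2 _ (Finset.mem_sdiff.mp hβ'S).1 (Finset.mem_sdiff.mp hβ'S).2
        have hsβ'pos : sref γ β' ∈ Pos Φ Δ := by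
          by_contra hcc
          have hmem : β' ∈ Pq.InvF Φ Δ Δ (sref γ) := Pq.mem_InvF.mpr ⟨hβ'pos, hcc⟩
          have := Pq.inv_sref_pos_pairing hRS hγpos hmem
          linarith
        refine ⟨hsβ'pos, ?_⟩
        rw [Function.comp_apply, Pq.sref_sref]
        exact hβ'neg
  have hdisj2 : Disjoint A ((Pq.InvF Φ Δ Δ wPQ).image (sref γ)) := by
    rw [Finset.disjoint_left]
    intro β hβA hβimg
    obtain ⟨β', hβ', rfl⟩ := Finset.mem_image.mp hβimg
    have h1 := (Pq.mem_InvF.mp hβA).2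
    rw [Pq.sref_sref] at h1
    exact h1 (Pq.mem_InvF.mp hβ').1
  have hcard3 : (Pq.InvF Φ Δ Δ (wPQ ∘ sref γ)).card =
      A.card + (Pq.InvF Φ Δ Δ wPQ).card := by
    rw [hcompInv, Finset.card_union_of_disjoint hdisj2,
      Finset.card_image_of_injective _ (Pq.sref_inj γ)]
  have hlsγ : len Δ (sref γ) = A.card := Pq.len_eq_card hRS hsγWeyl
  have hlcomp : len Δ (wPQ ∘ sref γ) = A.card + S.card := by
    rw [Pq.len_eq_card hRS hcompWeyl, hcard3, hInv_eq]
  have part3a : len Δ (wPQ ∘ sref γ) = len Δ wPQ + len Δ (sref γ) := by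
    rw [hlcomp, hlsγ, hlenS]
    omega
  have hqsum := Pq.quantum_sum hRS hγpos hmax
  have hrhoΔ : cpr ((2:ℝ) • rho Φ Δ) γ = (A.card : ℝ) + 1 := by
    rw [Pq.two_rho]
    rw [show cpr (∑ β ∈ Pos Φ Δ, β) γ = ∑ β ∈ Pos Φ Δ, cpr β γ from
      Pq.cpr_sum (f := fun v => v) γ]
    rw [hqsum, hA]
  have part3b : (len Δ (wPQ ∘ sref γ) : ℝ) =
      cpr ((2:ℝ) • (rho Φ Δ - rho Φ Δ')) γ - 1 := by
    rw [smul_sub, Pq.cpr_sub, hrhoΔ, hrhoΔ', hlcomp]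
    push_cast
    ring
  exact ⟨part1, part2, part3a, part3b⟩
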